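/- arXiv:1304.7235 — 7 statements merged into one kernel-verified Lean document; each statement's English description precedes it below -/
import Mathlib

section
/- Let z₁, …, zₙ ∈ ℝⁿ be linearly independent vectors and let M = ([N(z₁), …, N(zₙ)]ᵀ)⁻¹ be the inverse of the matrix whose rows are the normalized vectors N(z₁)ᵀ, …, N(zₙ)ᵀ, and let m₁, …, mₙ denote the columns of M. Then δ(z₁, …, zₙ) = 1 / max_{k∈{1,…,n}} ‖m_k‖, where ‖·‖ is the Euclidean norm. -/
open scoped RealInnerProductSpace BigOperators
open MeasureTheory ProbabilityTheory

noncomputable section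

/-- Identity map from plain vectors to Euclidean space (L2 norm). -/
def toE {n : ℕ} (x : Fin n → ℝ) : EuclideanSpace ℝ (Fin n) := WithLp.toLp 2 x

/-- Identity map from Euclidean space to plain vectors. -/
def ofE {n : ℕ} (x : EuclideanSpace ℝ (Fin n)) : Fin n → ℝ := x

/-- Normalization N(x) = x / ‖x‖. -/
def nrm {n : ℕ} (x : EuclideanSpace ℝ (Fin n)) : EuclideanSpace ℝ (Fin n) := ‖x‖⁻¹ • x

/-- δ̂(S, v): the norm of the projection of v onto the orthogonal complement of span S,
divided by ‖v‖ (the sine of the angle between v and span S). -/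
def deltaHat {n : ℕ} (S : Set (EuclideanSpace ℝ (Fin n))) (v : EuclideanSpace ℝ (Fin n)) : ℝ :=
  ‖(Submodule.orthogonalProjectionOnto ((Submodule.span ℝ S)ᗮ) v : EuclideanSpace ℝ (Fin n))‖ / ‖v‖

/-- δ(z₁, …, zₙ) = min over k of δ̂({z_i : i ≠ k}, z_k). -/
def deltaVec {n : ℕ} (z : Fin n → EuclideanSpace ℝ (Fin n)) : ℝ :=
  ⨅ k : Fin n, deltaHat (z '' {i | i ≠ k}) (z k)

/-- δ(A) for rows a₁, …, a_m: the minimum of δ over all choices of n linearly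
independent rows. -/
def deltaRows {m n : ℕ} (a : Fin m → EuclideanSpace ℝ (Fin n)) : ℝ :=
  sInf { d | ∃ f : Fin n → Fin m, LinearIndependent ℝ (a ∘ f) ∧ d = deltaVec (a ∘ f) }

/-- A vertex of the polyhedron {x : ∀ i, ⟪a i, x⟫ ≤ b i}. -/
def IsVertex {m n : ℕ} (a : Fin m → EuclideanSpace ℝ (Fin n)) (b : Fin m → ℝ)
    (z : EuclideanSpace ℝ (Fin n)) : Prop :=
  (∀ i, ⟪a i, z⟫ ≤ b i) ∧ Submodule.span ℝ (a '' {i | ⟪a i, z⟫ = b i}) = ⊤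

/-- Two distinct vertices are neighboring if n−1 linearly independent constraints are
tight at both. -/
def Neighboring {m n : ℕ} (a : Fin m → EuclideanSpace ℝ (Fin n)) (b : Fin m → ℝ)
    (z₁ z₂ : EuclideanSpace ℝ (Fin n)) : Prop :=
  IsVertex a b z₁ ∧ IsVertex a b z₂ ∧ z₁ ≠ z₂ ∧
    ∃ s : Finset (Fin m), s.card = n - 1 ∧
      LinearIndependent ℝ (fun i : s => a i) ∧
      ∀ i ∈ s, ⟪a i, z₁⟫ = b i ∧ ⟪a i, z₂⟫ = b i

/-- The largest absolute value of a sub-determinant of size k. -/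
def subdetSup {m n : ℕ} (A : Matrix (Fin m) (Fin n) ℝ) (k : ℕ) : ℝ :=
  ⨆ (f : Fin k → Fin m) (_ : Function.Injective f) (g : Fin k → Fin n)
    (_ : Function.Injective g), |(A.submatrix f g).det|

end

section
open Matrix
variable {n : ℕ}

lemma inner_eq_sum (x y : EuclideanSpace ℝ (Fin n)) : ⟪x, y⟫ = ∑ i, x i * y i := by
  simp [PiLp.inner_apply, RCLike.inner_apply]
  exact Finset.sum_congr rfl fun _ _ => mul_comm _ _

lemma mem_orth_span {S : Set (EuclideanSpace ℝ (Fin n))} {m : EuclideanSpace ℝ (Fin n)}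
    (h : ∀ s ∈ S, ⟪s, m⟫ = 0) : m ∈ (Submodule.span ℝ S)ᗮ := by
  rw [Submodule.mem_orthogonal]
  intro u hu
  induction hu using Submodule.span_induction with
  | mem s hs => exact h s hs
  | zero => simp
  | add x y _ _ hx hy => rw [inner_add_left, hx, hy, add_zero]
  | smul c x _ hx => rw [inner_smul_left, hx, mul_zero]

/-- Key computation for one index. -/
lemma deltaHat_key (a : Fin n → EuclideanSpace ℝ (Fin n))
    (A : Matrix (Fin n) (Fin n) ℝ) (hA : IsUnit A)
    (hAa : ∀ i j, A i j = a i j) (k : Fin n) (hak : ‖a k‖ = 1) :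
    deltaHat (a '' {i | i ≠ k}) (a k) = ‖toE (fun i => A⁻¹ i k)‖⁻¹ := by
  have hdet : IsUnit A.det := (Matrix.isUnit_iff_isUnit_det A).1 hA
  set m : EuclideanSpace ℝ (Fin n) := toE (fun i => A⁻¹ i k) with hm
  have hmi : ∀ i, m i = A⁻¹ i k := fun i => by rw [hm]; rfl
  -- ⟪a j, m⟫ = δ_{jk}
  have h1 : ∀ j, ⟪a j, m⟫ = if j = k then 1 else 0 := by
    intro j
    have : ⟪a j, m⟫ = (A * A⁻¹) j k := by
      rw [inner_eq_sum, Matrix.mul_apply]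
      exact Finset.sum_congr rfl fun i _ => by rw [hAa, hmi]
    rw [this, Matrix.mul_nonsing_inv A hdet, Matrix.one_apply]
  have hakm : ⟪a k, m⟫ = 1 := by rw [h1]; simp
  have hmne : m ≠ 0 := by
    intro h; rw [h] at hakm; simp at hakm
  have hmnorm : ‖m‖ ≠ 0 := norm_ne_zero_iff.2 hmne
  set W := Submodule.span ℝ (a '' {i | i ≠ k}) with hW
  have hmW : m ∈ Wᗮ := by
    apply mem_orth_span
    rintro s ⟨i, hi, rfl⟩
    have hi' : i ≠ k := hi
    rw [h1 i, if_neg hi']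
  -- any x ∈ Wᗮ is ⟪a k, x⟫ • m
  have hdecomp : ∀ x : EuclideanSpace ℝ (Fin n), x ∈ Wᗮ → x = ⟪a k, x⟫ • m := by
    intro x hx
    have hzero : ∀ j, j ≠ k → ⟪a j, x⟫ = 0 := fun j hj =>
      Submodule.inner_right_of_mem_orthogonal
        (Submodule.subset_span (s := a '' {i | i ≠ k}) ⟨j, hj, rfl⟩) hx
    have hAv : ∀ j, (A *ᵥ ofE x) j = if j = k then ⟪a k, x⟫ else 0 := by
      intro j
      have : (A *ᵥ ofE x) j = ⟪a j, x⟫ := by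
        rw [inner_eq_sum, Matrix.mulVec, dotProduct]
        exact Finset.sum_congr rfl fun i _ => by rw [hAa]; rfl
      rw [this]
      by_cases h : j = k
      · subst h; simp
      · rw [if_neg h, hzero j h]
    have hxv : ofE x = A⁻¹ *ᵥ (A *ᵥ ofE x) := by
      rw [Matrix.mulVec_mulVec, Matrix.nonsing_inv_mul A hdet, Matrix.one_mulVec]
    ext i
    have : x i = (A⁻¹ *ᵥ (A *ᵥ ofE x)) i := congrFun hxv i
    rw [show (⟪a k, x⟫ • m) i = ⟪a k, x⟫ * A⁻¹ i k from rfl, this,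
      Matrix.mulVec, dotProduct]
    rw [Finset.sum_congr rfl fun j (_ : j ∈ Finset.univ) => by rw [hAv j]]
    simp [Finset.sum_ite_eq', mul_comm]
  set P : EuclideanSpace ℝ (Fin n) := (Submodule.orthogonalProjectionOnto Wᗮ (a k) : EuclideanSpace ℝ (Fin n)) with hP
  have hPW : P ∈ Wᗮ := SetLike.coe_mem _
  have hPdec : P = ⟪a k, P⟫ • m := hdecomp P hPW
  have hsub : a k - P ∈ Wᗮᗮ := by
      have := Submodule.sub_starProjection_mem_orthogonal (K := Wᗮ) (a k)
      rwa [Submodule.starProjection_apply] at this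
  have hmP : ⟪m, P⟫ = 1 := by
    have h0 : ⟪m, a k - P⟫ = 0 := Submodule.inner_right_of_mem_orthogonal hmW hsub
    rw [inner_sub_right] at h0
    have : ⟪m, a k⟫ = ⟪a k, m⟫ := real_inner_comm _ _
    linarith [hakm, this ▸ h0]
  have hc : ⟪a k, P⟫ = (‖m‖ ^ 2)⁻¹ := by
    have h2 : ⟪m, P⟫ = ⟪a k, P⟫ * ‖m‖ ^ 2 := by
      rw [congrArg (fun y => ⟪m, y⟫) hPdec, inner_smul_right, real_inner_self_eq_norm_sq]
    rw [h2] at hmP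
    field_simp at hmP ⊢
    linarith
  have hPnorm : ‖P‖ = ‖m‖⁻¹ := by
    rw [hPdec, norm_smul, hc]
    rw [Real.norm_eq_abs, abs_of_pos (by positivity)]
    field_simp
  rw [deltaHat, hak, div_one]
  exact hPnorm

end

section
open Matrix
variable {n : ℕ}

lemma deltaHat_nrm (z : Fin n → EuclideanSpace ℝ (Fin n)) (hz0 : ∀ i, z i ≠ 0) (k : Fin n) :
    deltaHat (z '' {i | i ≠ k}) (z k)
      = deltaHat ((fun i => nrm (z i)) '' {i | i ≠ k}) (nrm (z k)) := by
  have hnz : ∀ i, ‖z i‖ ≠ 0 := fun i => norm_ne_zero_iff.2 (hz0 i)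
  have hzi : ∀ i, z i = ‖z i‖ • nrm (z i) := by
    intro i; rw [nrm, smul_smul, mul_inv_cancel₀ (hnz i), one_smul]
  have hspan : Submodule.span ℝ (z '' {i | i ≠ k})
      = Submodule.span ℝ ((fun i => nrm (z i)) '' {i | i ≠ k}) := by
    apply le_antisymm <;> rw [Submodule.span_le] <;> rintro s ⟨i, hi, rfl⟩
    · rw [SetLike.mem_coe, hzi i]
      exact Submodule.smul_mem _ _ (Submodule.subset_span ⟨i, hi, rfl⟩)
    · exact Submodule.smul_mem _ (‖z i‖⁻¹) (Submodule.subset_span ⟨i, hi, rfl⟩)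
  have hcongr : ∀ (K L : Submodule ℝ (EuclideanSpace ℝ (Fin n)))
      (v : EuclideanSpace ℝ (Fin n)), K = L →
      ((Submodule.orthogonalProjectionOnto Kᗮ v : EuclideanSpace ℝ (Fin n)))
        = (Submodule.orthogonalProjectionOnto Lᗮ v : EuclideanSpace ℝ (Fin n)) := by
    rintro K L v rfl; rfl
  rw [deltaHat, deltaHat, hcongr _ _ (z k) hspan]
  set K := (Submodule.span ℝ ((fun i => nrm (z i)) '' {i | i ≠ k}))ᗮ
  have hn1 : ‖nrm (z k)‖ = 1 := by
    rw [nrm, norm_smul, Real.norm_eq_abs, abs_of_nonneg (by positivity)]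
    exact inv_mul_cancel₀ (hnz k)
  have hpz : (Submodule.orthogonalProjectionOnto K (z k) : EuclideanSpace ℝ (Fin n))
      = ‖z k‖ • (Submodule.orthogonalProjectionOnto K (nrm (z k)) : EuclideanSpace ℝ (Fin n)) := by
    conv_lhs => rw [hzi k]
    rw [_root_.map_smul]
    rfl
  rw [hpz, norm_smul, Real.norm_eq_abs, abs_of_nonneg (norm_nonneg _), hn1, div_one,
    mul_comm, mul_div_assoc, div_self (hnz k), mul_one]

lemma stmt0' {n : ℕ} (hn : 0 < n) (z : Fin n → EuclideanSpace ℝ (Fin n))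
    (hz : LinearIndependent ℝ z) :
    (⨅ k : Fin n, deltaHat (z '' {i | i ≠ k}) (z k)) =
      1 / ⨆ k : Fin n, ‖toE (fun i => (Matrix.of fun i j => ofE (nrm (z i)) j)⁻¹ i k)‖ := by
  have : Nonempty (Fin n) := ⟨⟨0, hn⟩⟩
  set a : Fin n → EuclideanSpace ℝ (Fin n) := fun i => nrm (z i) with ha_def
  set A : Matrix (Fin n) (Fin n) ℝ := Matrix.of fun i j => ofE (nrm (z i)) j with hA_def
  have hz0 : ∀ i, z i ≠ 0 := fun i => hz.ne_zero i
  have hnz : ∀ i, ‖z i‖ ≠ 0 := fun i => norm_ne_zero_iff.2 (hz0 i)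
  have ha : LinearIndependent ℝ a := by
    have h := hz.units_smul (fun i => Units.mk0 (‖z i‖⁻¹) (inv_ne_zero (hnz i)))
    have heq : (fun i => Units.mk0 (‖z i‖⁻¹) (inv_ne_zero (hnz i))) • z = a := by
      funext i
      show (‖z i‖⁻¹ : ℝ) • z i = nrm (z i)
      rfl
    rwa [heq] at h
  have hA : IsUnit A := by
    rw [← Matrix.linearIndependent_rows_iff_isUnit]
    let e := WithLp.linearEquiv 2 ℝ (Fin n → ℝ)
    exact ha.map' e.toLinearMap e.ker
  have hAa : ∀ i j, A i j = a i j := fun i j => rfl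
  have hak : ∀ k, ‖a k‖ = 1 := by
    intro k
    show ‖nrm (z k)‖ = 1
    rw [nrm, norm_smul, Real.norm_eq_abs, abs_of_nonneg (by positivity)]
    exact inv_mul_cancel₀ (hnz k)
  set g : Fin n → ℝ := fun k => ‖toE (fun i => A⁻¹ i k)‖ with hg_def
  have hdet : IsUnit A.det := (Matrix.isUnit_iff_isUnit_det A).1 hA
  have hgpos : ∀ k, 0 < g k := by
    intro k
    rw [hg_def]
    refine norm_pos_iff.2 fun h0 => ?_
    have h1 : (A * A⁻¹) k k = 1 := by
      rw [Matrix.mul_nonsing_inv A hdet, Matrix.one_apply_eq]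
    rw [Matrix.mul_apply] at h1
    have : ∀ i, A⁻¹ i k = 0 := fun i => by
      have := congrArg (fun v : EuclideanSpace ℝ (Fin n) => v i) h0
      simpa [toE] using this
    simp [this] at h1
  have hterm : ∀ k, deltaHat (z '' {i | i ≠ k}) (z k) = (g k)⁻¹ := by
    intro k
    rw [deltaHat_nrm z hz0 k]
    exact deltaHat_key a A hA hAa k (hak k)
  obtain ⟨k₀, hk₀⟩ := Finite.exists_max g
  have hsup : (⨆ k, g k) = g k₀ :=
    le_antisymm (ciSup_le hk₀) (le_ciSup (Set.Finite.bddAbove (Set.finite_range g)) k₀)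
  have hinf : (⨅ k, (g k)⁻¹) = (g k₀)⁻¹ :=
    le_antisymm (ciInf_le (Set.Finite.bddBelow (Set.finite_range _)) k₀)
      (le_ciInf fun k => by
        have := hgpos k
        have := hk₀ k
        gcongr)
  calc (⨅ k : Fin n, deltaHat (z '' {i | i ≠ k}) (z k))
      = ⨅ k, (g k)⁻¹ := by exact iInf_congr hterm
    _ = (g k₀)⁻¹ := hinf
    _ = 1 / ⨆ k, g k := by rw [hsup, one_div]

end


/-- For linearly independent z₁, …, zₙ ∈ ℝⁿ, with M the inverse of the
matrix whose rows are N(z₁)ᵀ, …, N(zₙ)ᵀ, we have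
δ(z₁, …, zₙ) = 1 / max_k ‖m_k‖, where m_k are the columns of M. -/
theorem stmt0 {n : ℕ} (hn : 0 < n) (z : Fin n → EuclideanSpace ℝ (Fin n))
    (hz : LinearIndependent ℝ z) :
    deltaVec z =
      1 / ⨆ k : Fin n, ‖toE (fun i => (Matrix.of fun i j => ofE (nrm (z i)) j)⁻¹ i k)‖ := by
  rw [deltaVec]
  exact stmt0' hn z hz
end

section
/- Let A ∈ ℝ^{m×n} be a matrix whose rows a₁ᵀ, …, a_mᵀ all have Euclidean norm 1 and which has n linearly independent rows, let b ∈ ℝ^m, and let P = {x ∈ ℝⁿ : Ax ≤ b}. Let y₁ and y₂ be two neighboring vertices of P and let a_iᵀ be a row of A. If a_iᵀ(y₂ − y₁) ≠ 0, then |a_iᵀ(y₂ − y₁)| ≥ δ(A) · ‖y₂ − y₁‖. -/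
open scoped RealInnerProductSpace BigOperators
open MeasureTheory ProbabilityTheory Matrix

/-- Let A have unit-norm rows a₁, …, a_m and n linearly independent rows,
let y₁, y₂ be neighboring vertices of P = {x : Ax ≤ b}, and let aᵢ be a row of A.
If aᵢᵀ(y₂ − y₁) ≠ 0 then |aᵢᵀ(y₂ − y₁)| ≥ δ(A)·‖y₂ − y₁‖. -/
theorem stmt4 {m n : ℕ} (a : Fin m → EuclideanSpace ℝ (Fin n)) (b : Fin m → ℝ)
    (hnorm : ∀ i, ‖a i‖ = 1)
    (hrank : ∃ f : Fin n → Fin m, LinearIndependent ℝ (a ∘ f))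
    (y₁ y₂ : EuclideanSpace ℝ (Fin n))
    (hnb : Neighboring a b y₁ y₂)
    (i : Fin m) (hi : ⟪a i, y₂ - y₁⟫ ≠ 0) :
    deltaRows a * ‖y₂ - y₁‖ ≤ |⟪a i, y₂ - y₁⟫| := by
  obtain ⟨hv1, hv2, hne, s, hcard, hli, hts⟩ := hnb
  set d : EuclideanSpace ℝ (Fin n) := y₂ - y₁ with hd
  have hdne : d ≠ 0 := sub_ne_zero.mpr (Ne.symm hne)
  -- n is a successor
  have hn0 : n ≠ 0 := by
    rintro rfl
    exact hi (by rw [Subsingleton.elim d 0, inner_zero_right])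
  obtain ⟨n', rfl⟩ := Nat.exists_eq_succ_of_ne_zero hn0
  have hcard' : s.card = n' := by simpa using hcard
  -- the family enumerating s
  have e : Fin n' ≃ s := (s.equivFin.trans (finCongr hcard')).symm
  set g : Fin n' → Fin m := fun j => (e j : Fin m) with hg
  have hgs : ∀ j, g j ∈ s := fun j => (e j).2
  have hrange_g : Set.range g = ↑s := by
    ext x
    constructor
    · rintro ⟨j, rfl⟩; exact hgs j
    · intro hx; exact ⟨e.symm ⟨x, hx⟩, by simp [hg]⟩
  set S : Set (EuclideanSpace ℝ (Fin (n' + 1))) := a '' ↑s with hS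
  set K := Submodule.span ℝ S with hK
  -- d is orthogonal to K
  have hdS : ∀ v ∈ S, ⟪v, d⟫ = 0 := by
    rintro v ⟨j, hj, rfl⟩
    obtain ⟨h1, h2⟩ := hts j hj
    simp [hd, inner_sub_right, h1, h2]
  have hdW : d ∈ Kᗮ := by
    rw [hK]
    intro u hu
    induction hu using Submodule.span_induction with
    | mem x hx => exact hdS x hx
    | zero => simp
    | add x y _ _ hx hy => simp [inner_add_left, hx, hy]
    | smul c x _ hx => simp [inner_smul_left, hx]
  -- a i not in K
  have haiK : a i ∉ K := fun h => hi (hdW (a i) h)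
  -- the linearly independent family of n rows
  set f : Fin (n' + 1) → Fin m := Fin.cons i g with hf
  have hafg : a ∘ f = Fin.cons (a i) (a ∘ g) := by
    funext k
    refine Fin.cases ?_ ?_ k <;> simp [hf]
  have hlig : LinearIndependent ℝ (a ∘ g) := by
    have : a ∘ g = (fun i : s => a i) ∘ fun j => e j := rfl
    rw [this]
    exact hli.comp _ e.injective
  have hrange_ag : Set.range (a ∘ g) = S := by
    rw [Set.range_comp, hrange_g]
  have hlif : LinearIndependent ℝ (a ∘ f) := by
    rw [hafg]
    refine linearIndependent_fin_cons.mpr ⟨hlig, ?_⟩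
    rw [hrange_ag]; exact haiK
  -- dimensions
  have hfinK : Module.finrank ℝ K = n' := by
    rw [hK, ← hrange_ag]
    rw [finrank_span_eq_card hlig]
    simp
  have hfinW : Module.finrank ℝ Kᗮ = 1 := by
    have := K.finrank_add_finrank_orthogonal
    rw [hfinK, finrank_euclideanSpace, Fintype.card_fin] at this
    omega
  have hWspan : Submodule.span ℝ {d} = Kᗮ := by
    apply Submodule.eq_of_le_of_finrank_le
    · rw [Submodule.span_le, Set.singleton_subset_iff]; exact hdW
    · rw [hfinW, finrank_span_singleton hdne]
  -- projection of a i onto Kᗮ is c • d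
  set p : EuclideanSpace ℝ (Fin (n' + 1)) := (Submodule.orthogonalProjectionOnto Kᗮ (a i) : EuclideanSpace ℝ (Fin (n' + 1))) with hp
  obtain ⟨c, hc⟩ : ∃ c : ℝ, c • d = p := by
    have : p ∈ Submodule.span ℝ {d} := by
      rw [hWspan]; exact (Submodule.orthogonalProjectionOnto Kᗮ (a i)).2
    exact Submodule.mem_span_singleton.mp this
  have hip : ⟪a i, d⟫ = ⟪p, d⟫ := by
    have h1 : a i - p ∈ Kᗮᗮ := Submodule.sub_starProjection_mem_orthogonal (K := Kᗮ) (a i)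
    have h2 : ⟪a i - p, d⟫ = 0 := by rw [real_inner_comm]; exact h1 d hdW
    rw [inner_sub_left] at h2
    linarith
  have hval : |⟪a i, d⟫| = |c| * ‖d‖ ^ 2 := by
    rw [hip, ← hc, real_inner_smul_left, real_inner_self_eq_norm_sq]
    rw [abs_mul, abs_of_nonneg (by positivity : (0:ℝ) ≤ ‖d‖ ^ 2)]
  have hpnorm : ‖p‖ = |c| * ‖d‖ := by
    rw [← hc, norm_smul, Real.norm_eq_abs]
  -- deltaHat S (a i) = ‖p‖
  have hDH : deltaHat S (a i) = |c| * ‖d‖ := by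
    rw [deltaHat, hnorm i, div_one]; exact hpnorm
  -- deltaVec (a ∘ f) ≤ deltaHat S (a i)
  have himg : (a ∘ f) '' {j | j ≠ 0} = S := by
    rw [← hrange_ag]
    ext x
    simp only [Set.mem_image, Set.mem_setOf_eq, Set.mem_range]
    constructor
    · rintro ⟨j, hj, rfl⟩
      obtain ⟨j', rfl⟩ := Fin.exists_succ_eq.mpr hj
      exact ⟨j', by simp [hf]⟩
    · rintro ⟨j', rfl⟩
      exact ⟨j'.succ, Fin.succ_ne_zero j', by simp [hf]⟩
  have hf0 : (a ∘ f) 0 = a i := by simp [hf]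
  have hdHnonneg : ∀ (S' : Set (EuclideanSpace ℝ (Fin (n' + 1)))) v, 0 ≤ deltaHat S' v :=
    fun S' v => div_nonneg (norm_nonneg _) (norm_nonneg _)
  have hDV : deltaVec (a ∘ f) ≤ deltaHat S (a i) := by
    have h := ciInf_le (f := fun k => deltaHat ((a ∘ f) '' {j | j ≠ k}) ((a ∘ f) k))
      ⟨0, by rintro x ⟨k, rfl⟩; exact hdHnonneg _ _⟩ 0
    rw [himg, hf0] at h
    exact h
  -- deltaRows a ≤ deltaVec (a ∘ f)
  have hDR : deltaRows a ≤ deltaVec (a ∘ f) := by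
    apply csInf_le
    · refine ⟨0, ?_⟩
      rintro x ⟨f', _, rfl⟩
      exact Real.iInf_nonneg fun k => hdHnonneg _ _
    · exact ⟨f, hlif, rfl⟩
  calc deltaRows a * ‖d‖ ≤ deltaHat S (a i) * ‖d‖ :=
        mul_le_mul_of_nonneg_right (hDR.trans hDV) (norm_nonneg _)
    _ = |c| * ‖d‖ ^ 2 := by rw [hDH]; ring
    _ = |⟪a i, d⟫| := hval.symm
end

section
/- Let A ∈ ℤ^{m×n} be an integer matrix having n linearly independent rows. Then 1/δ(A) ≤ n·Δ₁·Δ_{n−1} ≤ n·Δ², where Δ₁, Δ_{n−1}, and Δ denote the largest absolute value of any sub-determinant of A of size 1, of size n−1, and of arbitrary size, respectively. -/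
open scoped RealInnerProductSpace BigOperators
open MeasureTheory ProbabilityTheory Matrix

lemma le_subdetSup' {m n k : ℕ} (A : Matrix (Fin m) (Fin n) ℝ)
    {f : Fin k → Fin m} {g : Fin k → Fin n} (hf : Function.Injective f)
    (hg : Function.Injective g) :
    |(A.submatrix f g).det| ≤ subdetSup A k :=
  calc |(A.submatrix f g).det|
      ≤ ⨆ _ : Function.Injective g, |(A.submatrix f g).det| :=
        le_ciSup (f := fun _ : Function.Injective g => |(A.submatrix f g).det|)
          (Set.Finite.bddAbove (Set.finite_range _)) hg
    _ ≤ ⨆ (g : Fin k → Fin n) (_ : Function.Injective g), |(A.submatrix f g).det| :=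
        le_ciSup (f := fun g : Fin k → Fin n =>
            ⨆ (_ : Function.Injective g), |(A.submatrix f g).det|)
          (Set.Finite.bddAbove (Set.finite_range _)) g
    _ ≤ ⨆ (_ : Function.Injective f) (g : Fin k → Fin n) (_ : Function.Injective g),
          |(A.submatrix f g).det| :=
        le_ciSup (f := fun _ : Function.Injective f =>
            ⨆ (g : Fin k → Fin n) (_ : Function.Injective g), |(A.submatrix f g).det|)
          (Set.Finite.bddAbove (Set.finite_range _)) hf
    _ ≤ subdetSup A k := by
        unfold subdetSup
        exact le_ciSup (Set.Finite.bddAbove (Set.finite_range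
          (fun f : Fin k → Fin m => ⨆ (_ : Function.Injective f) (g : Fin k → Fin n)
            (_ : Function.Injective g), |(A.submatrix f g).det|))) f

lemma subdetSup_nonneg' {m n : ℕ} (A : Matrix (Fin m) (Fin n) ℝ) (k : ℕ) :
    0 ≤ subdetSup A k :=
  Real.iSup_nonneg fun _ => Real.iSup_nonneg fun _ => Real.iSup_nonneg fun _ =>
    Real.iSup_nonneg fun _ => abs_nonneg _

lemma subdetSup_zero' {m n : ℕ} (A : Matrix (Fin m) (Fin n) ℝ) : subdetSup A 0 = 1 := by
  unfold subdetSup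
  rw [ciSup_unique, ciSup_pos (Function.injective_of_subsingleton _), ciSup_unique,
    ciSup_pos (Function.injective_of_subsingleton _)]
  simp

open Matrix in
lemma key_aux {m n' : ℕ} (A : Matrix (Fin m) (Fin (n'+1)) ℤ)
    (f : Fin (n'+1) → Fin m)
    (hf : LinearIndependent ℝ ((fun i => toE fun j => ((A i j : ℝ))) ∘ f))
    (k : Fin (n'+1)) :
    1 ≤ ((n'+1 : ℕ) : ℝ) * subdetSup (A.map ((↑) : ℤ → ℝ)) 1 *
          subdetSup (A.map ((↑) : ℤ → ℝ)) n' ∧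
      1 / (((n'+1 : ℕ) : ℝ) * subdetSup (A.map ((↑) : ℤ → ℝ)) 1 *
          subdetSup (A.map ((↑) : ℤ → ℝ)) n') ≤
        deltaHat (((fun i => toE fun j => ((A i j : ℝ))) ∘ f) '' {i | i ≠ k})
          (((fun i => toE fun j => ((A i j : ℝ))) ∘ f) k) := by
  classical
  set AR := A.map ((↑) : ℤ → ℝ) with hAR
  set Δ₁ := subdetSup AR 1 with hΔ₁d
  set Δ' := subdetSup AR n' with hΔ'd
  set Nr : ℝ := ((n'+1 : ℕ) : ℝ) with hNr
  set a : Fin m → EuclideanSpace ℝ (Fin (n'+1)) := fun i => toE fun j => ((A i j : ℝ)) with ha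
  set B : Matrix (Fin (n'+1)) (Fin (n'+1)) ℝ := AR.submatrix f id with hB
  have hBli : LinearIndependent ℝ (fun i => B i) :=
    hf.map' (WithLp.linearEquiv 2 ℝ (Fin (n'+1) → ℝ)).toLinearMap (LinearEquiv.ker _)
  have hdet_unit : IsUnit B := Matrix.linearIndependent_rows_iff_isUnit.mp hBli
  have hdetB_ne : B.det ≠ 0 := by
    intro h
    rw [Matrix.isUnit_iff_isUnit_det, h] at hdet_unit
    simpa using hdet_unit
  have hcast : B = (Int.castRingHom ℝ).mapMatrix (A.submatrix f id) := rfl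
  have hdet_cast : B.det = (((A.submatrix f id).det : ℤ) : ℝ) := by
    rw [hcast]; exact (RingHom.map_det (Int.castRingHom ℝ) _).symm
  have hdet1 : (1:ℝ) ≤ |B.det| := by
    rw [hdet_cast] at hdetB_ne ⊢
    have hne : (A.submatrix f id).det ≠ 0 := by exact_mod_cast hdetB_ne
    rw [← Int.cast_abs]
    exact_mod_cast Int.one_le_abs hne
  have hfinj : Function.Injective f := Function.Injective.of_comp hf.injective
  set w : Fin (n'+1) → ℝ := fun j => B.adjugate j k with hw
  set wE : EuclideanSpace ℝ (Fin (n'+1)) := toE w with hwEd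
  have hinner : ∀ i, ⟪a (f i), wE⟫ = B.det * (if i = k then 1 else 0) := by
    intro i
    have h1 : ⟪a (f i), wE⟫ = ∑ j, B i j * w j := by
      simp only [PiLp.inner_apply, RCLike.inner_apply, conj_trivial]
      exact Finset.sum_congr rfl fun j _ => mul_comm _ _
    rw [h1]
    have h2 : ∑ j, B i j * w j = (B * B.adjugate) i k := by
      simp [Matrix.mul_apply, hw]
    rw [h2, Matrix.mul_adjugate]
    simp [Matrix.smul_apply, Matrix.one_apply]
  set S := Submodule.span ℝ ((a ∘ f) '' {i | i ≠ k}) with hS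
  have hwS : wE ∈ Sᗮ := by
    have hsub : (a ∘ f) '' {i | i ≠ k} ⊆ ((ℝ ∙ wE)ᗮ : Set _) := by
      rintro x ⟨i, hi, rfl⟩
      refine Submodule.mem_orthogonal_singleton_iff_inner_left.mpr ?_
      rw [Function.comp_apply, hinner i, if_neg hi, mul_zero]
    have h1 : S ≤ (ℝ ∙ wE)ᗮ := Submodule.span_le.mpr hsub
    exact Submodule.orthogonal_le h1
      (Submodule.le_orthogonal_orthogonal _ (Submodule.mem_span_singleton_self wE))
  set zk := a (f k) with hzkd
  set pv : EuclideanSpace ℝ (Fin (n'+1)) :=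
    (Submodule.orthogonalProjectionOnto Sᗮ zk : EuclideanSpace ℝ (Fin (n'+1))) with hpvd
  have hproj : ⟪wE, pv⟫ = ⟪wE, zk⟫ := by
    have hmem : zk - pv ∈ Sᗮᗮ := Submodule.sub_starProjection_mem_orthogonal (K := Sᗮ) zk
    have h0 : ⟪wE, zk - pv⟫ = 0 := (Submodule.mem_orthogonal _ _).mp hmem wE hwS
    rw [inner_sub_right] at h0
    linarith
  have hip : ⟪wE, zk⟫ = B.det := by
    rw [real_inner_comm, hzkd, hinner k, if_pos rfl, mul_one]
  have hkey : 1 ≤ ‖wE‖ * ‖pv‖ :=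
    calc (1:ℝ) ≤ |B.det| := hdet1
      _ = |⟪wE, pv⟫| := by rw [hproj, hip]
      _ ≤ ‖wE‖ * ‖pv‖ := abs_real_inner_le_norm _ _
  have hΔ'0 : 0 ≤ Δ' := subdetSup_nonneg' AR n'
  have hΔ₁0 : 0 ≤ Δ₁ := subdetSup_nonneg' AR 1
  have hwj : ∀ j, |w j| ≤ Δ' := by
    intro j
    have h1 : w j = (-1)^((k:ℕ)+(j:ℕ)) * (B.submatrix k.succAbove j.succAbove).det :=
      Matrix.adjugate_fin_succ_eq_det_submatrix B j k
    have h2 : |w j| = |(B.submatrix k.succAbove j.succAbove).det| := by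
      rw [h1, abs_mul, abs_pow, abs_neg, abs_one, one_pow, one_mul]
    have h3 : B.submatrix k.succAbove j.succAbove
        = AR.submatrix (f ∘ k.succAbove) (id ∘ j.succAbove) := by
      rw [hB, Matrix.submatrix_submatrix]
    rw [h2, h3]
    exact le_subdetSup' AR (hfinj.comp Fin.succAbove_right_injective)
      (Function.injective_id.comp Fin.succAbove_right_injective)
  have hnormw : ‖wE‖ ≤ Real.sqrt Nr * Δ' := by
    rw [hwEd, EuclideanSpace.norm_eq]
    have hsum : ∑ j, ‖w j‖^2 ≤ Nr * Δ'^2 := by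
      calc ∑ j, ‖w j‖^2 ≤ ∑ _j : Fin (n'+1), Δ'^2 := by
            refine Finset.sum_le_sum fun j _ => ?_
            rw [Real.norm_eq_abs]
            exact pow_le_pow_left₀ (abs_nonneg _) (hwj j) 2
        _ = Nr * Δ'^2 := by
            rw [Finset.sum_const, Finset.card_univ, Fintype.card_fin, nsmul_eq_mul, hNr]
    calc Real.sqrt (∑ j, ‖toE w j‖^2) ≤ Real.sqrt (Nr * Δ'^2) := Real.sqrt_le_sqrt (by simpa [toE] using hsum)
      _ = Real.sqrt Nr * Δ' := by
          rw [Real.sqrt_mul (by positivity), Real.sqrt_sq hΔ'0]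
  have hBk : ∀ j, |B k j| ≤ Δ₁ := by
    intro j
    have h1 : |B k j| = |(AR.submatrix (fun _ : Fin 1 => f k) (fun _ : Fin 1 => j)).det| := by
      rw [Matrix.det_fin_one]; rfl
    rw [h1]
    exact le_subdetSup' AR (Function.injective_of_subsingleton _)
      (Function.injective_of_subsingleton _)
  have hnormz : ‖zk‖ ≤ Real.sqrt Nr * Δ₁ := by
    rw [hzkd, ha, EuclideanSpace.norm_eq]
    have hsum : ∑ j, ‖(A (f k) j : ℝ)‖^2 ≤ Nr * Δ₁^2 := by
      calc ∑ j, ‖(A (f k) j : ℝ)‖^2 ≤ ∑ _j : Fin (n'+1), Δ₁^2 := by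
            refine Finset.sum_le_sum fun j _ => ?_
            rw [Real.norm_eq_abs]
            exact pow_le_pow_left₀ (abs_nonneg _) (hBk j) 2
        _ = Nr * Δ₁^2 := by
            rw [Finset.sum_const, Finset.card_univ, Fintype.card_fin, nsmul_eq_mul, hNr]
    calc Real.sqrt (∑ j, ‖toE (fun j => ((A (f k) j : ℝ))) j‖^2)
        ≤ Real.sqrt (Nr * Δ₁^2) := Real.sqrt_le_sqrt (by simpa [toE] using hsum)
      _ = Real.sqrt Nr * Δ₁ := by
          rw [Real.sqrt_mul (by positivity), Real.sqrt_sq hΔ₁0]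
  have hz0 : 0 < ‖zk‖ := by
    have hne : zk ≠ 0 := hf.ne_zero k
    simpa [norm_pos_iff] using hne
  have hpvz : ‖pv‖ ≤ ‖zk‖ := by
    have h1 : ‖pv‖ = ‖Submodule.orthogonalProjectionOnto Sᗮ zk‖ := rfl
    rw [h1]
    calc ‖Submodule.orthogonalProjectionOnto Sᗮ zk‖ ≤ ‖Submodule.orthogonalProjectionOnto Sᗮ‖ * ‖zk‖ :=
          (Submodule.orthogonalProjectionOnto Sᗮ).le_opNorm zk
      _ ≤ 1 * ‖zk‖ := mul_le_mul_of_nonneg_right (Submodule.orthogonalProjectionOnto_norm_le Sᗮ) (norm_nonneg _)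
      _ = ‖zk‖ := one_mul _
  have hprod : ‖wE‖ * ‖zk‖ ≤ Nr * Δ₁ * Δ' := by
    have hs : Real.sqrt Nr * Real.sqrt Nr = Nr := Real.mul_self_sqrt (by positivity)
    calc ‖wE‖ * ‖zk‖ ≤ (Real.sqrt Nr * Δ') * (Real.sqrt Nr * Δ₁) :=
          mul_le_mul hnormw hnormz (norm_nonneg _) (by positivity)
      _ = (Real.sqrt Nr * Real.sqrt Nr) * (Δ₁ * Δ') := by ring
      _ = Nr * Δ₁ * Δ' := by rw [hs]; ring
  have hD1 : 1 ≤ Nr * Δ₁ * Δ' := by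
    have h1 : ‖wE‖ * ‖pv‖ ≤ ‖wE‖ * ‖zk‖ := mul_le_mul_of_nonneg_left hpvz (norm_nonneg _)
    linarith
  refine ⟨hD1, ?_⟩
  have hgoal : deltaHat ((a ∘ f) '' {i | i ≠ k}) ((a ∘ f) k) = ‖pv‖ / ‖zk‖ := rfl
  rw [hgoal, div_le_div_iff₀ (by linarith) hz0]
  have h3 : ‖zk‖ ≤ ‖pv‖ * (‖wE‖ * ‖zk‖) := by nlinarith [norm_nonneg pv, norm_nonneg wE]
  calc 1 * ‖zk‖ = ‖zk‖ := one_mul _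
    _ ≤ ‖pv‖ * (‖wE‖ * ‖zk‖) := h3
    _ ≤ ‖pv‖ * (Nr * Δ₁ * Δ') := mul_le_mul_of_nonneg_left hprod (norm_nonneg _)

/-- For an integer matrix A ∈ ℤ^{m×n} with n linearly independent rows,
1/δ(A) ≤ n·Δ₁·Δ_{n−1} ≤ n·Δ², where Δ₁, Δ_{n−1}, Δ are the largest absolute values of
sub-determinants of A of size 1, size n−1, and arbitrary size, respectively. -/
theorem stmt5 {m n : ℕ} (hn : 0 < n) (A : Matrix (Fin m) (Fin n) ℤ)
    (hrank : ∃ f : Fin n → Fin m,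
      LinearIndependent ℝ fun k => toE fun j => ((A (f k) j : ℝ))) :
    1 / deltaRows (fun i => toE fun j => ((A i j : ℝ))) ≤
        (n : ℝ) * subdetSup (A.map ((↑) : ℤ → ℝ)) 1 * subdetSup (A.map ((↑) : ℤ → ℝ)) (n-1) ∧
      (n : ℝ) * subdetSup (A.map ((↑) : ℤ → ℝ)) 1 * subdetSup (A.map ((↑) : ℤ → ℝ)) (n-1) ≤
        (n : ℝ) * (⨆ k : Fin (min m n), subdetSup (A.map ((↑) : ℤ → ℝ)) (k + 1)) ^ 2 := by
  obtain ⟨n', rfl⟩ : ∃ n', n = n' + 1 := ⟨n - 1, (Nat.succ_pred_eq_of_pos hn).symm⟩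
  obtain ⟨f₀, hf₀⟩ := hrank
  have hf₀' : LinearIndependent ℝ ((fun i => toE fun j => ((A i j : ℝ))) ∘ f₀) := hf₀
  simp only [Nat.add_sub_cancel]
  set AR := A.map ((↑) : ℤ → ℝ) with hAR
  set Δ₁ := subdetSup AR 1 with hΔ₁d
  set Δ' := subdetSup AR n' with hΔ'd
  set a : Fin m → EuclideanSpace ℝ (Fin (n'+1)) := fun i => toE fun j => ((A i j : ℝ)) with ha
  have hD1 : 1 ≤ ((n'+1 : ℕ) : ℝ) * Δ₁ * Δ' := (key_aux A f₀ hf₀' 0).1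
  have hD0 : (0:ℝ) < ((n'+1 : ℕ) : ℝ) * Δ₁ * Δ' := lt_of_lt_of_le one_pos hD1
  constructor
  · -- part 1
    have hlow : 1 / (((n'+1 : ℕ) : ℝ) * Δ₁ * Δ') ≤ deltaRows a := by
      unfold deltaRows
      refine le_csInf ⟨deltaVec (a ∘ f₀), f₀, hf₀', rfl⟩ ?_
      rintro d ⟨f, hfli, rfl⟩
      unfold deltaVec
      exact le_ciInf fun k => (key_aux A f hfli k).2
    calc 1 / deltaRows a ≤ 1 / (1 / (((n'+1 : ℕ) : ℝ) * Δ₁ * Δ')) :=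
          one_div_le_one_div_of_le (by positivity) hlow
      _ = ((n'+1 : ℕ) : ℝ) * Δ₁ * Δ' := one_div_one_div _
  · -- part 2
    have hf0inj : Function.Injective f₀ := Function.Injective.of_comp hf₀'.injective
    have hm : n' + 1 ≤ m := by
      have h := Fintype.card_le_of_injective f₀ hf0inj
      simpa using h
    have hbdd : BddAbove (Set.range fun k : Fin (min m (n'+1)) => subdetSup AR (↑k+1)) :=
      Set.Finite.bddAbove (Set.finite_range _)
    have hΔ₁Δ : Δ₁ ≤ ⨆ k : Fin (min m (n'+1)), subdetSup AR (↑k+1) := by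
      have h := le_ciSup (f := fun k : Fin (min m (n'+1)) => subdetSup AR (↑k+1)) hbdd
        (⟨0, by omega⟩ : Fin (min m (n'+1)))
      simpa [hΔ₁d] using h
    have hΔnn : 0 ≤ ⨆ k : Fin (min m (n'+1)), subdetSup AR (↑k+1) :=
      le_trans (hΔ₁d ▸ subdetSup_nonneg' AR 1) hΔ₁Δ
    rw [mul_assoc, sq]
    refine mul_le_mul_of_nonneg_left ?_ (by positivity)
    by_cases h0 : n' = 0
    · subst h0
      have hΔ'1 : Δ' = 1 := subdetSup_zero' AR
      have hΔ₁1 : 1 ≤ Δ₁ := by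
        rw [hΔ'1] at hD1
        norm_num at hD1
        exact hD1
      rw [hΔ'1, mul_one]
      exact le_trans hΔ₁Δ (le_mul_of_one_le_left hΔnn (le_trans hΔ₁1 hΔ₁Δ))
    · obtain ⟨j, rfl⟩ : ∃ j, n' = j + 1 :=
        ⟨n' - 1, (Nat.succ_pred_eq_of_pos (Nat.pos_of_ne_zero h0)).symm⟩
      have hΔ'Δ : Δ' ≤ ⨆ k : Fin (min m (j+1+1)), subdetSup AR (↑k+1) := by
        have h := le_ciSup (f := fun k : Fin (min m (j+1+1)) => subdetSup AR (↑k+1)) hbdd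
          (⟨j, by omega⟩ : Fin (min m (j+1+1)))
        simpa [hΔ'd] using h
      exact mul_le_mul hΔ₁Δ hΔ'Δ (hΔ'd ▸ subdetSup_nonneg' AR (j+1)) hΔnn
end

section
/- Let X₁, …, Xₙ be independent random variables, each uniformly distributed on (0,1], let A = [a₁, …, aₙ] ∈ ℝ^{n×n} be an invertible matrix with columns a₁, …, aₙ, define (Y₁, …, Y_{n−1}, Z)ᵀ = A·(X₁, …, Xₙ)ᵀ, let g : ℝ^{n−1} → ℝ be a measurable function, and let ε > 0. Then the probability that Z ∈ [g(Y₁,…,Y_{n−1}), g(Y₁,…,Y_{n−1}) + ε] is at most 2nε / (δ(a₁,…,aₙ) · min_{k∈{1,…,n}} ‖a_k‖). -/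
open scoped RealInnerProductSpace BigOperators
open MeasureTheory ProbabilityTheory Matrix

open Set in
lemma cover_lemma {n : ℕ} (Bl : (Fin (n+1) → ℝ) →ₗ[ℝ] (Fin n → ℝ))
    (d : Fin (n+1) → ℝ) (hd : d ≠ 0) (hBd : Bl d = 0) :
    Bl '' (Set.univ.pi fun _ => Set.Icc (0:ℝ) 1) ⊆
      ⋃ k : Fin (n+1), (Bl '' ((Set.univ.pi fun _ => Set.Icc (0:ℝ) 1) ∩ {x | x k = 0}) ∪
        Bl '' ((Set.univ.pi fun _ => Set.Icc (0:ℝ) 1) ∩ {x | x k = 1})) := by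
  rintro _ ⟨x, hx, rfl⟩
  obtain ⟨i₀, hi₀⟩ := Function.ne_iff.mp hd
  simp only [Pi.zero_apply] at hi₀
  set T : Set ℝ := {t | ∀ i, x i + t * d i ∈ Set.Icc (0:ℝ) 1} with hT
  have hxC : ∀ i, x i ∈ Set.Icc (0:ℝ) 1 := fun i => hx i (mem_univ i)
  have h0T : (0:ℝ) ∈ T := by intro i; simpa using hxC i
  have hTne : T.Nonempty := ⟨0, h0T⟩
  have hTbdd : BddAbove T := by
    refine ⟨1 / |d i₀|, fun t ht => ?_⟩
    have h1 : x i₀ + t * d i₀ ∈ Set.Icc (0:ℝ) 1 := ht i₀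
    have h2 : |t * d i₀| ≤ 1 := by
      have h3 := hxC i₀
      rw [Set.mem_Icc] at h1 h3
      rw [abs_le]; constructor <;> nlinarith [h1.1, h1.2, h3.1, h3.2]
    calc t ≤ |t| := le_abs_self t
    _ = |t * d i₀| / |d i₀| := by rw [abs_mul]; field_simp
    _ ≤ 1 / |d i₀| := by gcongr
  have hTclosed : IsClosed T := by
    have : T = ⋂ i, ((fun t => x i + t * d i) ⁻¹' Set.Icc (0:ℝ) 1) := by
      ext t; simp [hT, Set.mem_iInter]
    rw [this]
    exact isClosed_iInter fun i => IsClosed.preimage (by fun_prop) isClosed_Icc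
  set t₀ := sSup T with ht₀
  have ht₀T : t₀ ∈ T := hTclosed.csSup_mem hTne hTbdd
  set y : Fin (n+1) → ℝ := fun i => x i + t₀ * d i with hy
  have hyC : y ∈ Set.univ.pi fun _ : Fin (n+1) => Set.Icc (0:ℝ) 1 := fun i _ => ht₀T i
  have key : ∃ k, y k = 0 ∨ y k = 1 := by
    by_contra h
    push_neg at h
    set δ : ℝ := Finset.univ.inf' ⟨i₀, Finset.mem_univ i₀⟩
      (fun k => if d k = 0 then 1 else min (y k) (1 - y k) / |d k|) with hδ
    have hmin : ∀ k, 0 < min (y k) (1 - y k) := by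
      intro k
      obtain ⟨h1, h2⟩ := h k
      have hyk : y k ∈ Set.Icc (0:ℝ) 1 := ht₀T k
      rw [Set.mem_Icc] at hyk
      refine lt_min (lt_of_le_of_ne hyk.1 (Ne.symm h1)) ?_
      rcases lt_or_eq_of_le hyk.2 with hlt | heq
      · linarith
      · exact absurd heq h2
    have hδpos : 0 < δ := by
      rw [hδ]; refine (Finset.lt_inf'_iff _).mpr ?_
      intro k _
      by_cases hk : d k = 0
      · simp [hk]
      · simp only [hk, if_false]
        exact div_pos (hmin k) (abs_pos.mpr hk)
    have hmem : t₀ + δ ∈ T := by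
      intro i
      rcases eq_or_ne (d i) 0 with hdi | hdi
      · simpa [hdi, add_mul] using ht₀T i
      · have hle : δ ≤ min (y i) (1 - y i) / |d i| := by
          have h' := Finset.inf'_le
            (fun k => if d k = 0 then 1 else min (y k) (1 - y k) / |d k|)
            (Finset.mem_univ i)
          rw [if_neg hdi] at h'
          exact h'
        have habs : δ * |d i| ≤ min (y i) (1 - y i) :=
          (le_div_iff₀ (abs_pos.mpr hdi)).mp hle
        have h1 : δ * |d i| ≤ y i := habs.trans (min_le_left _ _)
        have h2 : δ * |d i| ≤ 1 - y i := habs.trans (min_le_right _ _)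
        have hb1 : -(δ * |d i|) ≤ δ * d i := by
          have := mul_le_mul_of_nonneg_left (neg_abs_le (d i)) hδpos.le
          linarith [this]
        have hb2 : δ * d i ≤ δ * |d i| :=
          mul_le_mul_of_nonneg_left (le_abs_self (d i)) hδpos.le
        have hyi : y i ∈ Set.Icc (0:ℝ) 1 := ht₀T i
        rw [Set.mem_Icc] at hyi ⊢
        have hyiv : y i = x i + t₀ * d i := rfl
        constructor <;> nlinarith [hyi.1, hyi.2]
    have : t₀ + δ ≤ t₀ := le_csSup hTbdd hmem
    linarith
  obtain ⟨k, hyk⟩ := key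
  have hBxy : Bl x = Bl y := by
    have hxy : y = x + t₀ • d := by funext i; simp [hy, smul_eq_mul]
    rw [hxy, map_add, LinearMap.map_smul, hBd, smul_zero, add_zero]
  rw [hBxy]
  refine Set.mem_iUnion.mpr ⟨k, ?_⟩
  rcases hyk with h0 | h1
  · exact Or.inl ⟨y, ⟨hyC, h0⟩, rfl⟩
  · exact Or.inr ⟨y, ⟨hyC, h1⟩, rfl⟩

open Set in
lemma slice_lemma {n : ℕ} {W : Set (Fin (n+1) → ℝ)} (hW : MeasurableSet W)
    {g : (Fin n → ℝ) → ℝ} {ε : ℝ} {K : Set (Fin n → ℝ)} (hK : MeasurableSet K)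
    (hsub : ∀ y ∈ W, y (Fin.last n) ∈
      Set.Icc (g fun j => y j.castSucc) (g (fun j => y j.castSucc) + ε))
    (hproj : ∀ y ∈ W, (fun j => y j.castSucc) ∈ K) :
    volume W ≤ ENNReal.ofReal ε * volume K := by
  set e := MeasurableEquiv.piFinSuccAbove (fun _ : Fin (n+1) => ℝ) (Fin.last n) with he
  have hmp := MeasureTheory.volume_preserving_piFinSuccAbove
    (fun _ : Fin (n+1) => ℝ) (Fin.last n)
  have himg : MeasurableSet (e '' W) := e.measurableEmbedding.measurableSet_image.mpr hW
  have hWeq : W = e ⁻¹' (e '' W) := by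
    rw [Set.preimage_image_eq _ e.injective]
  have hvol : volume W = volume (e '' W) := by
    conv_lhs => rw [hWeq]
    exact hmp.measure_preimage himg.nullMeasurableSet
  rw [hvol]
  have hcast : ∀ j : Fin n, (Fin.last n).succAbove j = j.castSucc := fun j =>
    Fin.succAbove_last_apply j
  have hprod : (volume : Measure (ℝ × (Fin n → ℝ))) = (volume : Measure ℝ).prod volume := rfl
  rw [hprod, Measure.prod_apply_symm himg]
  have hbound : ∀ w : Fin n → ℝ,
      volume ((fun z => (z, w)) ⁻¹' (e '' W)) ≤ K.indicator (fun _ => ENNReal.ofReal ε) w := by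
    intro w
    by_cases hKy : w ∈ K
    · rw [Set.indicator_of_mem hKy]
      have hsubset : ((fun z => (z, w)) ⁻¹' (e '' W)) ⊆
          Set.Icc (g w) (g w + ε) := by
        intro z hz
        obtain ⟨y, hyW, hey⟩ := hz
        have hy1 : y (Fin.last n) = z := congrArg Prod.fst hey
        have hy2 : (fun j => y ((Fin.last n).succAbove j)) = w := congrArg Prod.snd hey
        have hy2' : (fun j => y j.castSucc) = w := by
          funext j; rw [← hcast j]; exact congrFun hy2 j
        have := hsub y hyW
        rw [hy1, hy2'] at this
        exact this
      calc volume ((fun z => (z, w)) ⁻¹' (e '' W)) ≤ volume (Set.Icc (g w) (g w + ε)) :=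
            measure_mono hsubset
      _ = ENNReal.ofReal ε := by rw [Real.volume_Icc]; congr 1; ring
    · rw [Set.indicator_of_notMem hKy]
      have hempty : ((fun z => (z, w)) ⁻¹' (e '' W)) = ∅ := by
        ext z
        simp only [Set.mem_preimage, Set.mem_empty_iff_false, iff_false]
        intro hz
        obtain ⟨y, hyW, hey⟩ := hz
        have hy2 : (fun j => y ((Fin.last n).succAbove j)) = w := congrArg Prod.snd hey
        have hy2' : (fun j => y j.castSucc) = w := by
          funext j; rw [← hcast j]; exact congrFun hy2 j
        exact hKy (hy2' ▸ hproj y hyW)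
      rw [hempty, measure_empty]
  calc ∫⁻ w, volume ((fun z => (z, w)) ⁻¹' (e '' W)) ∂volume ≤
      ∫⁻ w, K.indicator (fun _ => ENNReal.ofReal ε) w ∂volume := lintegral_mono hbound
  _ = ENNReal.ofReal ε * volume K := by
      rw [lintegral_indicator hK]; simp [Measure.restrict_apply, hK]

open Set in
lemma face_vol {n : ℕ} (A : Matrix (Fin (n+1)) (Fin (n+1)) ℝ) (k : Fin (n+1)) (c : ℝ) :
    volume ((fun x => (fun j : Fin n => A.mulVec x j.castSucc)) ''
      ((Set.univ.pi fun _ : Fin (n+1) => Set.Icc (0:ℝ) 1) ∩ {x | x k = c}))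
      ≤ ENNReal.ofReal |(A.submatrix Fin.castSucc k.succAbove).det| := by
  set M := A.submatrix Fin.castSucc k.succAbove with hM
  set v : Fin n → ℝ := fun j => c * A j.castSucc k with hv
  set Cn := Set.univ.pi fun _ : Fin n => Set.Icc (0:ℝ) 1 with hCn
  have hkey : ∀ w : Fin n → ℝ,
      (fun j : Fin n => A.mulVec (k.insertNth c w) j.castSucc) = v + M.mulVec w := by
    intro w
    set z : Fin (n+1) → ℝ := k.insertNth c w with hz
    funext j
    simp only [Matrix.mulVec, dotProduct, Pi.add_apply, hv, hM]
    rw [Fin.sum_univ_succAbove (fun i => A j.castSucc i * z i) k]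
    have h1 : z k = c := by simp [hz]
    have h2 : ∀ l : Fin n, z (k.succAbove l) = w l := fun l => by simp [hz]
    rw [h1]
    simp only [Matrix.submatrix_apply]
    rw [mul_comm]
    congr 1
    exact Finset.sum_congr rfl fun l _ => by rw [h2 l]
  have hsub : (fun x => (fun j : Fin n => A.mulVec x j.castSucc)) ''
      ((Set.univ.pi fun _ : Fin (n+1) => Set.Icc (0:ℝ) 1) ∩ {x | x k = c})
      ⊆ (fun w => v + w) '' ((Matrix.toLin' M) '' Cn) := by
    rintro _ ⟨x, ⟨hxC, hxk⟩, rfl⟩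
    have hxeq : x = k.insertNth c (k.removeNth x) := by
      rw [← hxk]; exact (Fin.insertNth_self_removeNth k x).symm
    refine ⟨M.mulVec (k.removeNth x),
      ⟨k.removeNth x, fun j _ => hxC (k.succAbove j) (mem_univ _), by rw [Matrix.toLin'_apply]⟩, ?_⟩
    show v + M.mulVec (k.removeNth x) = fun j => (A.mulVec x) j.castSucc
    conv_rhs => rw [hxeq]
    exact (hkey (k.removeNth x)).symm
  calc volume _ ≤ volume ((fun w => v + w) '' ((Matrix.toLin' M) '' Cn)) := measure_mono hsub
  _ = volume ((Matrix.toLin' M) '' Cn) := by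
      rw [Set.image_add_left, measure_preimage_add]
  _ = ENNReal.ofReal |LinearMap.det (Matrix.toLin' M)| * volume Cn :=
      Measure.addHaar_image_linearMap volume _ _
  _ = ENNReal.ofReal |M.det| := by
      rw [LinearMap.det_toLin']
      have : volume Cn = 1 := by
        rw [hCn, volume_pi_pi]
        simp [Real.volume_Icc]
      rw [this, mul_one]

open Set in
lemma det_minor {n : ℕ} (A : Matrix (Fin (n+1)) (Fin (n+1)) ℝ) (hA : IsUnit A.det)
    (k : Fin (n+1)) :
    |(A.submatrix Fin.castSucc k.succAbove).det| =
      |A.det| * |A⁻¹.mulVec (Pi.single (Fin.last n) 1) k| := by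
  have hdk : A⁻¹.mulVec (Pi.single (Fin.last n) 1) k = A⁻¹ k (Fin.last n) := by
    simp [Matrix.mulVec, dotProduct, Pi.single_apply]
  have hinv : A⁻¹ k (Fin.last n) = (A.det)⁻¹ * (A.adjugate k (Fin.last n)) := by
    rw [Matrix.inv_def]
    simp [Ring.inverse_eq_inv']
  have hadj : A.adjugate k (Fin.last n) = (A.updateRow (Fin.last n) (Pi.single k 1)).det :=
    Matrix.adjugate_apply A k (Fin.last n)
  set M := A.updateRow (Fin.last n) (Pi.single k 1) with hMdef
  have hsubm : M.submatrix (Fin.last n).succAbove k.succAbove =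
      A.submatrix Fin.castSucc k.succAbove := by
    ext i j
    simp only [Matrix.submatrix_apply]
    rw [Fin.succAbove_last]
    exact congrFun (Matrix.updateRow_ne (by
      rw [← Fin.succAbove_last]
      exact Fin.succAbove_ne (Fin.last n) i)) _
  have hdet : M.det = (-1 : ℝ) ^ ((Fin.last n : ℕ) + (k : ℕ)) *
      (A.submatrix Fin.castSucc k.succAbove).det := by
    rw [Matrix.det_succ_row M (Fin.last n)]
    rw [Finset.sum_eq_single k]
    · rw [hsubm]
      have : M (Fin.last n) k = 1 := by
        rw [hMdef, Matrix.updateRow_self, Pi.single_eq_same]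
      rw [this, mul_one]
    · intro j _ hj
      have : M (Fin.last n) j = 0 := by
        rw [hMdef, Matrix.updateRow_self, Pi.single_eq_of_ne hj]
      rw [this, mul_zero, zero_mul]
    · intro h; exact absurd (Finset.mem_univ k) h
  have hdetA : A.det ≠ 0 := by
    intro h; rw [h] at hA; exact (by simpa using hA)
  rw [hdk, hinv, hadj, hdet]
  rw [abs_mul, abs_mul, abs_pow, abs_neg, abs_one, one_pow, one_mul, abs_inv]
  rw [← mul_assoc, mul_inv_cancel₀ (abs_ne_zero.mpr hdetA), one_mul]

lemma dk_bound {n : ℕ} (A : Matrix (Fin (n+1)) (Fin (n+1)) ℝ) (hA : IsUnit A.det) :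
    0 < deltaVec (fun k => toE fun i => A i k) * ⨅ k, ‖toE fun i => A i k‖ ∧
    ∀ k, |A⁻¹.mulVec (Pi.single (Fin.last n) 1) k| *
      (deltaVec (fun k => toE fun i => A i k) * ⨅ k, ‖toE fun i => A i k‖) ≤ 1 := by
  classical
  set a : Fin (n+1) → EuclideanSpace ℝ (Fin (n+1)) := fun k => toE fun i => A i k with ha
  set d : Fin (n+1) → ℝ := A⁻¹.mulVec (Pi.single (Fin.last n) 1) with hd
  set L : (Fin (n+1) → ℝ) ≃ₗ[ℝ] EuclideanSpace ℝ (Fin (n+1)) :=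
    (WithLp.linearEquiv 2 ℝ (Fin (n+1) → ℝ)).symm with hL
  have hAd : A.mulVec d = Pi.single (Fin.last n) 1 := by
    rw [hd, Matrix.mulVec_mulVec, Matrix.mul_nonsing_inv A hA, Matrix.one_mulVec]
  have hcols : LinearIndependent ℝ a := by
    have h := Matrix.linearIndependent_cols_iff_isUnit.mpr
      ((Matrix.isUnit_iff_isUnit_det A).mpr hA)
    have h2 := h.map' L.toLinearMap L.ker
    have h3 : a = ⇑L.toLinearMap ∘ fun i => Aᵀ i := rfl
    rw [h3]; exact h2
  set e : EuclideanSpace ℝ (Fin (n+1)) := toE (Pi.single (Fin.last n) 1) with he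
  have hnorme : ‖e‖ = 1 := by
    have h0 : e = EuclideanSpace.single (Fin.last n) (1:ℝ) := rfl
    rw [h0, EuclideanSpace.norm_single]
    norm_num
  have hsum : ∑ j, d j • a j = e := by
    have h1 : (∑ j, d j • (fun i => A i j : Fin (n+1) → ℝ)) = A.mulVec d := by
      funext i
      rw [Finset.sum_apply]
      simp [Matrix.mulVec, dotProduct, mul_comm]
    have h2 : ∀ j, a j = L (fun i => A i j) := fun j => rfl
    calc ∑ j, d j • a j = ∑ j, d j • L (fun i => A i j) := by simp_rw [h2]
    _ = L (∑ j, d j • (fun i => A i j : Fin (n+1) → ℝ)) := by rw [map_sum]; simp_rw [L.map_smul]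
    _ = L (A.mulVec d) := by rw [h1]
    _ = e := by rw [hAd]; rfl
  -- per-k bound
  have hkb : ∀ k, |d k| * (deltaHat (a '' {i | i ≠ k}) (a k) * ‖a k‖) ≤ 1 ∧
      0 < deltaHat (a '' {i | i ≠ k}) (a k) ∧ 0 < ‖a k‖ := by
    intro k
    set V := (Submodule.span ℝ (a '' {i | i ≠ k}))ᗮ with hV
    set P := Submodule.orthogonalProjectionOnto V with hP
    have hak0 : a k ≠ 0 := hcols.ne_zero k
    have haknorm : 0 < ‖a k‖ := norm_pos_iff.mpr hak0
    have hPj : ∀ j, j ≠ k → P (a j) = 0 := by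
      intro j hj
      rw [hP, Submodule.orthogonalProjectionOnto_eq_zero_iff]
      exact Submodule.le_orthogonal_orthogonal _
        (Submodule.subset_span ⟨j, hj, rfl⟩)
    have hPe : P e = d k • P (a k) := by
      rw [← hsum, map_sum]
      rw [Finset.sum_eq_single k]
      · rw [P.map_smul]
      · intro j _ hj; rw [P.map_smul, hPj j hj, smul_zero]
      · intro h; exact absurd (Finset.mem_univ k) h
    have hPnorm : ‖(P e : EuclideanSpace ℝ (Fin (n+1)))‖ ≤ 1 := by
      have h1 : ‖(P e : EuclideanSpace ℝ (Fin (n+1)))‖ = ‖P e‖ := rfl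
      rw [h1]
      calc ‖P e‖ ≤ ‖P‖ * ‖e‖ := P.le_opNorm e
      _ ≤ 1 * ‖e‖ := by
          apply mul_le_mul_of_nonneg_right (Submodule.orthogonalProjectionOnto_norm_le V) (norm_nonneg e)
      _ = 1 := by rw [one_mul, hnorme]
    have hPak : P (a k) ≠ 0 := by
      intro h0
      have : a k ∈ Vᗮ := Submodule.orthogonalProjectionOnto_eq_zero_iff.mp h0
      rw [hV, Submodule.orthogonal_orthogonal] at this
      exact hcols.notMem_span_image (by simp) this
    have hPakpos : 0 < ‖(P (a k) : EuclideanSpace ℝ (Fin (n+1)))‖ := by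
      rw [norm_pos_iff]
      intro h
      exact hPak (by exact_mod_cast Subtype.ext h)
    have hdh : deltaHat (a '' {i | i ≠ k}) (a k) * ‖a k‖ =
        ‖(P (a k) : EuclideanSpace ℝ (Fin (n+1)))‖ := by
      rw [deltaHat, div_mul_cancel₀ _ (ne_of_gt haknorm)]
    refine ⟨?_, by rw [deltaHat]; exact div_pos hPakpos haknorm, haknorm⟩
    rw [hdh]
    have : ‖(P e : EuclideanSpace ℝ (Fin (n+1)))‖ =
        |d k| * ‖(P (a k) : EuclideanSpace ℝ (Fin (n+1)))‖ := by
      rw [hPe]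
      push_cast
      rw [norm_smul]
      simp [Real.norm_eq_abs]
    rw [← this]
    exact hPnorm
  -- assemble
  have hre : (⨅ k, ‖toE fun i => A i k‖) = ⨅ k, ‖a k‖ := rfl
  have hrd : deltaVec a = ⨅ k, deltaHat (a '' {i | i ≠ k}) (a k) := rfl
  have hbdd1 : BddBelow (Set.range fun k => deltaHat (a '' {i | i ≠ k}) (a k)) :=
    (Set.finite_range _).bddBelow
  have hbdd2 : BddBelow (Set.range fun k => ‖a k‖) := (Set.finite_range _).bddBelow
  obtain ⟨k₁, hk₁⟩ := exists_eq_ciInf_of_finite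
    (f := fun k => deltaHat (a '' {i | i ≠ k}) (a k))
  obtain ⟨k₂, hk₂⟩ := exists_eq_ciInf_of_finite (f := fun k => ‖a k‖)
  have hδpos : 0 < deltaVec a := by
    rw [hrd, ← hk₁]; exact (hkb k₁).2.1
  have hmpos : 0 < ⨅ k, ‖a k‖ := by
    rw [← hk₂]; exact (hkb k₂).2.2
  constructor
  · rw [hre]; exact mul_pos hδpos hmpos
  · intro k
    rw [hre]
    have hδle : deltaVec a ≤ deltaHat (a '' {i | i ≠ k}) (a k) := by
      rw [hrd]; exact ciInf_le hbdd1 k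
    have hmle : (⨅ k, ‖a k‖) ≤ ‖a k‖ := ciInf_le hbdd2 k
    have hmul : deltaVec a * (⨅ k, ‖a k‖) ≤
        deltaHat (a '' {i | i ≠ k}) (a k) * ‖a k‖ :=
      mul_le_mul hδle hmle hmpos.le (hkb k).2.1.le
    calc |A⁻¹.mulVec (Pi.single (Fin.last n) 1) k| * (deltaVec a * ⨅ k, ‖a k‖)
        ≤ |d k| * (deltaHat (a '' {i | i ≠ k}) (a k) * ‖a k‖) :=
          mul_le_mul_of_nonneg_left hmul (abs_nonneg _)
    _ ≤ 1 := (hkb k).1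

/-- Let X₁, …, X_{n+1} be independent random variables uniform on (0,1],
let A ∈ ℝ^{(n+1)×(n+1)} be invertible with columns a₁, …, a_{n+1}, let
(Y₁, …, Yₙ, Z)ᵀ = A·(X₁, …, X_{n+1})ᵀ, let g be measurable and ε > 0. Then
P[Z ∈ [g(Y), g(Y)+ε]] ≤ 2(n+1)ε / (δ(a₁,…,a_{n+1}) · min_k ‖a_k‖). -/
theorem stmt8 {n : ℕ} {Ω : Type*} [MeasurableSpace Ω] (μ : Measure Ω)
    [IsProbabilityMeasure μ]
    (X : Fin (n+1) → Ω → ℝ) (hXmeas : ∀ i, Measurable (X i))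
    (hXindep : iIndepFun X μ)
    (hXlaw : ∀ i, μ.map (X i) = volume.restrict (Set.Ioc (0:ℝ) 1))
    (A : Matrix (Fin (n+1)) (Fin (n+1)) ℝ) (hA : IsUnit A.det)
    (g : (Fin n → ℝ) → ℝ) (hg : Measurable g) (ε : ℝ) (hε : 0 < ε) :
    μ {ω | A.mulVec (fun i => X i ω) (Fin.last n) ∈
        Set.Icc (g fun j => A.mulVec (fun i => X i ω) j.castSucc)
          (g (fun j => A.mulVec (fun i => X i ω) j.castSucc) + ε)} ≤
      ENNReal.ofReal (2 * ((n : ℝ) + 1) * ε /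
        (deltaVec (fun k => toE fun i => A i k) * ⨅ k, ‖toE fun i => A i k‖)) := by
  classical
  have hdetA : A.det ≠ 0 := by
    intro h; rw [h] at hA; simp at hA
  set Xv : Ω → (Fin (n+1) → ℝ) := fun ω i => X i ω with hXv
  have hXvmeas : Measurable Xv := measurable_pi_lambda _ hXmeas
  set cube := Set.univ.pi fun _ : Fin (n+1) => Set.Ioc (0:ℝ) 1 with hcube
  set C := Set.univ.pi fun _ : Fin (n+1) => Set.Icc (0:ℝ) 1 with hC
  -- joint law
  have hjoint : μ.map Xv = volume.restrict cube := by
    have h1 : Measure.pi (fun _ : Fin (n+1) => volume.restrict (Set.Ioc (0:ℝ) 1)) = μ.map Xv :=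
      Measure.pi_eq (fun s hs => by
        rw [Measure.map_apply hXvmeas (MeasurableSet.univ_pi hs)]
        have hpre : Xv ⁻¹' (Set.univ.pi s) = ⋂ i ∈ Finset.univ, X i ⁻¹' s i := by
          ext ω; simp [Set.mem_univ_pi, hXv]
        rw [hpre, hXindep.measure_inter_preimage_eq_mul Finset.univ (fun i _ => hs i)]
        exact Finset.prod_congr rfl fun i _ => by
          rw [← hXlaw i, Measure.map_apply (hXmeas i) (hs i)])
    have h2 : Measure.pi (fun _ : Fin (n+1) => volume.restrict (Set.Ioc (0:ℝ) 1)) =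
        volume.restrict cube :=
      Measure.pi_eq (fun s hs => by
        rw [Measure.restrict_apply (MeasurableSet.univ_pi hs), hcube, ← Set.pi_inter_distrib,
          volume_pi_pi]
        exact Finset.prod_congr rfl fun i _ => (Measure.restrict_apply (hs i)).symm)
    rw [← h1, h2]
  -- the target set
  set T : Set (Fin (n+1) → ℝ) := {y | y (Fin.last n) ∈
    Set.Icc (g fun j => y j.castSucc) ((g fun j => y j.castSucc) + ε)} with hTdef
  have hmeasT : MeasurableSet T := by
    have hφ : Measurable (fun y : Fin (n+1) → ℝ =>
        y (Fin.last n) - g (fun j => y j.castSucc)) :=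
      (measurable_pi_apply _).sub
        (hg.comp (measurable_pi_lambda _ fun j => measurable_pi_apply _))
    have : T = (fun y : Fin (n+1) → ℝ =>
        y (Fin.last n) - g (fun j => y j.castSucc)) ⁻¹' (Set.Icc 0 ε) := by
      ext y
      simp only [hTdef, Set.mem_setOf_eq, Set.mem_preimage, Set.mem_Icc]
      constructor
      · rintro ⟨h1, h2⟩; constructor <;> linarith
      · rintro ⟨h1, h2⟩; constructor <;> linarith
    rw [this]
    exact hφ measurableSet_Icc
  set f : (Fin (n+1) → ℝ) →ₗ[ℝ] (Fin (n+1) → ℝ) := Matrix.toLin' A with hf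
  have hfapp : ∀ x, f x = A.mulVec x := fun x => Matrix.toLin'_apply A x
  have hfcont : Continuous f := f.continuous_of_finiteDimensional
  have hfdet : LinearMap.det f = A.det := LinearMap.det_toLin' A
  have hfinj : Function.Injective f := by
    have : Function.Injective A.mulVec :=
      Matrix.mulVec_injective_iff_isUnit.mpr ((Matrix.isUnit_iff_isUnit_det A).mpr hA)
    intro x y hxy
    apply this
    rw [← hfapp, ← hfapp, hxy]
  set S := f ⁻¹' T with hSdef
  have hmeasS : MeasurableSet S := hmeasT.preimage hfcont.measurable
  -- event rewriting
  have hevent : {ω | A.mulVec (fun i => X i ω) (Fin.last n) ∈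
      Set.Icc (g fun j => A.mulVec (fun i => X i ω) j.castSucc)
        (g (fun j => A.mulVec (fun i => X i ω) j.castSucc) + ε)} = Xv ⁻¹' S := by
    ext ω
    simp only [Set.mem_setOf_eq, Set.mem_preimage, hSdef, hTdef, hfapp]
    exact Iff.rfl
  rw [hevent, ← Measure.map_apply hXvmeas hmeasS, hjoint,
    Measure.restrict_apply hmeasS]
  -- pass to closed cube
  have hsubC : cube ⊆ C := Set.pi_mono fun i _ => Set.Ioc_subset_Icc_self
  have hstep1 : volume (S ∩ cube) ≤ volume (S ∩ C) :=
    measure_mono (Set.inter_subset_inter_right _ hsubC)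
  -- compact sets
  have hCcomp : IsCompact C := isCompact_univ_pi fun _ => isCompact_Icc
  have hfC : IsCompact (f '' C) := hCcomp.image hfcont
  set Bl : (Fin (n+1) → ℝ) →ₗ[ℝ] (Fin n → ℝ) :=
    (LinearMap.funLeft ℝ ℝ Fin.castSucc).comp f with hBl
  have hBlapp : ∀ x, Bl x = fun j : Fin n => A.mulVec x j.castSucc := by
    intro x; funext j
    simp only [hBl, LinearMap.comp_apply, LinearMap.funLeft_apply, Function.comp, hfapp]
  have hBlcont : Continuous Bl := Bl.continuous_of_finiteDimensional
  set K := Bl '' C with hK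
  have hKcomp : IsCompact K := hCcomp.image hBlcont
  have hmeasK : MeasurableSet K := hKcomp.measurableSet
  -- change of variables
  have hSC : S ∩ C = f ⁻¹' (T ∩ f '' C) := by
    rw [Set.preimage_inter, hfinj.preimage_image]
  have hstep2 : volume (S ∩ C) =
      ENNReal.ofReal |(A.det)⁻¹| * volume (T ∩ f '' C) := by
    rw [hSC, Measure.addHaar_preimage_linearMap volume (by rw [hfdet]; exact hdetA), hfdet]
  -- slicing
  have hmeasW : MeasurableSet (T ∩ f '' C) := hmeasT.inter hfC.measurableSet
  have hstep3 : volume (T ∩ f '' C) ≤ ENNReal.ofReal ε * volume K := by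
    apply slice_lemma hmeasW hmeasK
    · intro y hy; exact hy.1
    · rintro y ⟨hyT, x, hxC, rfl⟩
      have : (fun j : Fin n => f x j.castSucc) = Bl x := by
        rw [hBlapp]; funext j; rw [hfapp]
      rw [this]
      exact ⟨x, hxC, rfl⟩
  -- the direction vector
  set d : Fin (n+1) → ℝ := A⁻¹.mulVec (Pi.single (Fin.last n) 1) with hd
  have hAd : A.mulVec d = Pi.single (Fin.last n) 1 := by
    rw [hd, Matrix.mulVec_mulVec, Matrix.mul_nonsing_inv A hA, Matrix.one_mulVec]
  have hdne : d ≠ 0 := by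
    intro h0
    have : A.mulVec d = 0 := by rw [h0, Matrix.mulVec_zero]
    rw [hAd] at this
    have := congrFun this (Fin.last n)
    simp at this
  have hBd : Bl d = 0 := by
    funext j
    rw [hBlapp d, hAd]
    have : (Fin.castSucc j) ≠ Fin.last n := (Fin.castSucc_lt_last j).ne
    simp [Pi.single_eq_of_ne this]
  -- shadow bound
  have hstep4 : volume K ≤
      ∑ k : Fin (n+1), ENNReal.ofReal (2 * (|A.det| * |d k|)) := by
    have hcov := cover_lemma Bl d hdne hBd
    calc volume K ≤ volume (⋃ k : Fin (n+1),
        (Bl '' (C ∩ {x | x k = 0}) ∪ Bl '' (C ∩ {x | x k = 1}))) :=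
          measure_mono (by rw [hK, hC]; exact hcov)
    _ ≤ ∑ k : Fin (n+1), volume (Bl '' (C ∩ {x | x k = 0}) ∪ Bl '' (C ∩ {x | x k = 1})) :=
          measure_iUnion_fintype_le _ _
    _ ≤ ∑ k : Fin (n+1), ENNReal.ofReal (2 * (|A.det| * |d k|)) := by
          apply Finset.sum_le_sum
          intro k _
          calc volume (Bl '' (C ∩ {x | x k = 0}) ∪ Bl '' (C ∩ {x | x k = 1}))
              ≤ volume (Bl '' (C ∩ {x | x k = 0})) + volume (Bl '' (C ∩ {x | x k = 1})) :=
                measure_union_le _ _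
          _ ≤ ENNReal.ofReal |(A.submatrix Fin.castSucc k.succAbove).det| +
              ENNReal.ofReal |(A.submatrix Fin.castSucc k.succAbove).det| := by
                have h0 := face_vol A k 0
                have h1 := face_vol A k 1
                have hBleq : (fun x => (fun j : Fin n => A.mulVec x j.castSucc)) = ⇑Bl := by
                  funext x; rw [hBlapp x]
                rw [hBleq] at h0 h1
                rw [hC]
                exact add_le_add h0 h1
          _ = ENNReal.ofReal (2 * (|A.det| * |d k|)) := by
                rw [det_minor A hA k, ← hd]
                rw [← ENNReal.ofReal_add (by positivity) (by positivity)]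
                congr 1; ring
  -- combine
  obtain ⟨hDpos, hDk⟩ := dk_bound A hA
  set D := deltaVec (fun k => toE fun i => A i k) * ⨅ k, ‖toE fun i => A i k‖ with hD
  have hfinal : |(A.det)⁻¹| * (ε * ∑ k : Fin (n+1), 2 * (|A.det| * |d k|)) ≤
      2 * ((n : ℝ) + 1) * ε / D := by
    have hsum : ∑ k : Fin (n+1), 2 * (|A.det| * |d k|) =
        2 * |A.det| * ∑ k : Fin (n+1), |d k| := by
      rw [Finset.mul_sum]; exact Finset.sum_congr rfl fun k _ => by ring
    have hdk : ∀ k, |d k| ≤ 1 / D := by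
      intro k
      rw [le_div_iff₀ hDpos]
      exact hDk k
    have hsum2 : ∑ k : Fin (n+1), |d k| ≤ ((n : ℝ) + 1) * (1 / D) := by
      calc ∑ k : Fin (n+1), |d k| ≤ ∑ _k : Fin (n+1), (1 / D) :=
            Finset.sum_le_sum fun k _ => hdk k
      _ = ((n : ℝ) + 1) * (1 / D) := by
            rw [Finset.sum_const, Finset.card_univ, Fintype.card_fin]
            push_cast; ring
    have hAdet : |(A.det)⁻¹| * |A.det| = 1 := by
      rw [abs_inv, inv_mul_cancel₀ (abs_ne_zero.mpr hdetA)]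
    calc |(A.det)⁻¹| * (ε * ∑ k : Fin (n+1), 2 * (|A.det| * |d k|))
        = (|(A.det)⁻¹| * |A.det|) * (2 * ε * ∑ k : Fin (n+1), |d k|) := by
          rw [hsum]; ring
    _ = 2 * ε * ∑ k : Fin (n+1), |d k| := by rw [hAdet, one_mul]
    _ ≤ 2 * ε * (((n : ℝ) + 1) * (1 / D)) := by
          apply mul_le_mul_of_nonneg_left hsum2 (by positivity)
    _ = 2 * ((n : ℝ) + 1) * ε / D := by field_simp
  calc volume (S ∩ cube) ≤ volume (S ∩ C) := hstep1
  _ = ENNReal.ofReal |(A.det)⁻¹| * volume (T ∩ f '' C) := hstep2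
  _ ≤ ENNReal.ofReal |(A.det)⁻¹| * (ENNReal.ofReal ε *
      ∑ k : Fin (n+1), ENNReal.ofReal (2 * (|A.det| * |d k|))) := by
        apply mul_le_mul_right (hstep3.trans (mul_le_mul_right hstep4 _))
  _ = ENNReal.ofReal (|(A.det)⁻¹| * (ε * ∑ k : Fin (n+1), 2 * (|A.det| * |d k|))) := by
        rw [← ENNReal.ofReal_sum_of_nonneg (fun k _ => by positivity)]
        rw [← ENNReal.ofReal_mul (le_of_lt hε), ← ENNReal.ofReal_mul (abs_nonneg _)]
  _ ≤ ENNReal.ofReal (2 * ((n : ℝ) + 1) * ε / D) := ENNReal.ofReal_le_ofReal hfinal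
end

section
/- Let a₁, …, aₙ ∈ ℝⁿ be linearly independent vectors. Then every column r of the inverse of the matrix [N(a₁), …, N(aₙ)] (the matrix whose columns are the normalized vectors N(a₁), …, N(aₙ)) satisfies ‖r‖ ≤ √n / δ(a₁, …, aₙ), where ‖·‖ is the Euclidean norm. -/
open scoped RealInnerProductSpace BigOperators
open MeasureTheory ProbabilityTheory Matrix

noncomputable section

lemma inner_eq_inner_orthProj {E : Type*} [NormedAddCommGroup E] [InnerProductSpace ℝ E]
    (K : Submodule ℝ E) [K.HasOrthogonalProjection] {w : E} (hw : w ∈ K) (v : E) :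
    ⟪w, v⟫ = ⟪w, (K.orthogonalProjectionOnto v : E)⟫ := by
  have h := K.sub_starProjection_mem_orthogonal v
  have h0 : ⟪w, v - (K.orthogonalProjectionOnto v : E)⟫ = 0 :=
    (K.mem_orthogonal _).1 h w hw
  rw [inner_sub_right] at h0
  linarith

end

/-- For linearly independent a₁, …, aₙ ∈ ℝⁿ, every column r of the
inverse of the matrix [N(a₁), …, N(aₙ)] (columns N(aᵢ)) satisfies
‖r‖ ≤ √n / δ(a₁, …, aₙ). -/
theorem stmt11 {n : ℕ} (a : Fin n → EuclideanSpace ℝ (Fin n))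
    (hli : LinearIndependent ℝ a) (k : Fin n) :
    ‖toE (fun i => (Matrix.of fun i j => ofE (nrm (a j)) i)⁻¹ i k)‖ ≤
      Real.sqrt n / deltaVec a := by
  classical
  set M : Matrix (Fin n) (Fin n) ℝ := Matrix.of fun i j => ofE (nrm (a j)) i with hMdef
  have ha0 : ∀ j, a j ≠ 0 := fun j => hli.ne_zero j
  have hnorm : ∀ j : Fin n, ‖a j‖ ≠ 0 := fun j => norm_ne_zero_iff.2 (ha0 j)
  -- normalized vectors are linearly independent
  have hliN : LinearIndependent ℝ (fun j => nrm (a j)) := by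
    have h := hli.units_smul (fun j => Units.mk0 (‖a j‖⁻¹) (inv_ne_zero (hnorm j)))
    convert h using 1
    funext j; rfl
  -- M is invertible
  have hcols : LinearIndependent ℝ (fun j => Mᵀ j) := by
    have h := hliN.map' (WithLp.linearEquiv 2 ℝ (Fin n → ℝ)).toLinearMap
      (LinearEquiv.ker _)
    convert h using 1
    all_goals rfl
  have hMunit : IsUnit M := Matrix.linearIndependent_cols_iff_isUnit.mp hcols
  have hMM : M⁻¹ * M = 1 := Matrix.nonsing_inv_mul M (((Matrix.isUnit_iff_isUnit_det M).mp hMunit))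
  -- the rows of the inverse
  set w : Fin n → EuclideanSpace ℝ (Fin n) := fun i => toE (fun j => M⁻¹ i j) with hwdef
  have hinner : ∀ i j, ⟪w i, nrm (a j)⟫ = if i = j then 1 else 0 := by
    intro i j
    have h1 : (M⁻¹ * M) i j = if i = j then 1 else 0 := by rw [hMM]; simp [Matrix.one_apply]
    rw [← h1, Matrix.mul_apply]
    simp only [PiLp.inner_apply, RCLike.inner_apply, conj_trivial]
    exact Finset.sum_congr rfl (fun x _ => mul_comm _ _)
  -- rows orthogonal to the other vectors
  have hw_orth : ∀ i, w i ∈ (Submodule.span ℝ (a '' {j | j ≠ i}))ᗮ := by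
    intro i
    have hO : Submodule.span ℝ {w i} ⟂ Submodule.span ℝ (a '' {j | j ≠ i}) := by
      rw [Submodule.isOrtho_span]
      rintro u hu v ⟨j, hj, rfl⟩
      rcases hu with rfl
      have h := hinner i j
      rw [if_neg (fun h' => hj h'.symm)] at h
      have haj : a j = ‖a j‖ • nrm (a j) := by
        rw [nrm, smul_inv_smul₀ (hnorm j)]
      rw [haj, real_inner_smul_right, h, mul_zero]
    exact hO.le (Submodule.mem_span_singleton_self _)
  -- abbreviations
  set d : Fin n → ℝ := fun i => deltaHat (a '' {j | j ≠ i}) (a i) with hddef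
  set p : Fin n → EuclideanSpace ℝ (Fin n) := fun i =>
    (Submodule.orthogonalProjectionOnto ((Submodule.span ℝ (a '' {j | j ≠ i}))ᗮ) (nrm (a i)) :
      EuclideanSpace ℝ (Fin n)) with hpdef
  have hkey : ∀ i, ⟪w i, p i⟫ = 1 := by
    intro i
    have h := inner_eq_inner_orthProj _ (hw_orth i) (nrm (a i))
    rw [hpdef, ← h]
    simpa using hinner i i
  have hp0 : ∀ i, p i ≠ 0 := by
    intro i hp
    have h := hkey i
    rw [hp, inner_zero_right] at h
    norm_num at h
  have hd : ∀ i, d i = ‖p i‖ := by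
    intro i
    have hsm : p i = ‖a i‖⁻¹ •
        (Submodule.orthogonalProjectionOnto ((Submodule.span ℝ (a '' {j | j ≠ i}))ᗮ) (a i) :
          EuclideanSpace ℝ (Fin n)) := by
      rw [hpdef]
      simp only [nrm, _root_.map_smul, Submodule.coe_smul]
    rw [hddef]
    simp only [deltaHat]
    rw [hsm, norm_smul, Real.norm_eq_abs, abs_of_nonneg (by positivity)]
    rw [div_eq_inv_mul]
  have hKrank : ∀ i,
      Module.finrank ℝ ((Submodule.span ℝ (a '' {j | j ≠ i}))ᗮ) = 1 := by
    intro i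
    have hsub : LinearIndependent ℝ (fun j : {j : Fin n // j ≠ i} => a ↑j) :=
      hli.comp _ Subtype.val_injective
    have hrange : Set.range (fun j : {j : Fin n // j ≠ i} => a ↑j) = a '' {j | j ≠ i} := by
      ext x
      constructor
      · rintro ⟨⟨j, hj⟩, rfl⟩; exact ⟨j, hj, rfl⟩
      · rintro ⟨j, hj, rfl⟩; exact ⟨⟨j, hj⟩, rfl⟩
    have h1 : Module.finrank ℝ (Submodule.span ℝ (a '' {j | j ≠ i})) = n - 1 := by
      rw [← hrange, finrank_span_eq_card hsub]
      simp [Fintype.card_subtype_compl]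
    have h2 := Submodule.finrank_add_finrank_orthogonal
      (K := Submodule.span ℝ (a '' {j | j ≠ i}))
    rw [finrank_euclideanSpace_fin, h1] at h2
    have hn : 0 < n := k.pos
    omega
  have hKeq : ∀ i, (Submodule.span ℝ (a '' {j | j ≠ i}))ᗮ = Submodule.span ℝ {p i} := by
    intro i
    refine (Submodule.eq_of_le_of_finrank_le ?_ ?_).symm
    · rw [Submodule.span_le, Set.singleton_subset_iff]
      exact SetLike.coe_mem _
    · rw [hKrank i, finrank_span_singleton (hp0 i)]
  have hwnorm : ∀ i, ‖w i‖ = (d i)⁻¹ := by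
    intro i
    obtain ⟨c, hc⟩ := Submodule.mem_span_singleton.mp ((hKeq i) ▸ hw_orth i)
    have h1 := hkey i
    rw [← hc, real_inner_smul_left, real_inner_self_eq_norm_sq] at h1
    have hpn : (0:ℝ) < ‖p i‖ := norm_pos_iff.2 (hp0 i)
    have hc' : c = (‖p i‖^2)⁻¹ := by
      field_simp at h1 ⊢
      linarith
    rw [← hc, norm_smul, hc', hd i, Real.norm_eq_abs, abs_of_nonneg (by positivity)]
    field_simp
  have hdpos : ∀ i, 0 < d i := fun i => (hd i) ▸ norm_pos_iff.2 (hp0 i)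
  have hbdd : BddBelow (Set.range d) := ⟨0, by rintro x ⟨i, rfl⟩; exact (hdpos i).le⟩
  have hδ_le : ∀ i, deltaVec a ≤ d i := fun i => ciInf_le hbdd i
  have hδpos : 0 < deltaVec a := by
    have hne : Nonempty (Fin n) := ⟨k⟩
    obtain ⟨i₀, hi₀⟩ := Finite.exists_min d
    exact lt_of_lt_of_le (hdpos i₀) (le_ciInf hi₀)
  have hentry : ∀ i, |M⁻¹ i k| ≤ (deltaVec a)⁻¹ := by
    intro i
    have h1 : |M⁻¹ i k| ≤ ‖w i‖ := by
      rw [hwdef]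
      rw [EuclideanSpace.norm_eq]
      have h2 : |M⁻¹ i k|^2 ≤ ∑ j, ‖toE (fun j => M⁻¹ i j) j‖^2 := by
        have h3 := Finset.single_le_sum
          (f := fun j => ‖toE (fun j => M⁻¹ i j) j‖^2) (fun j _ => by positivity)
          (Finset.mem_univ k)
        simpa [toE, Real.norm_eq_abs, sq_abs] using h3
      calc |M⁻¹ i k| = Real.sqrt (|M⁻¹ i k|^2) := by
              rw [Real.sqrt_sq_eq_abs, abs_abs]
        _ ≤ _ := Real.sqrt_le_sqrt h2
    calc |M⁻¹ i k| ≤ ‖w i‖ := h1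
      _ = (d i)⁻¹ := hwnorm i
      _ ≤ (deltaVec a)⁻¹ := by
          exact inv_anti₀ hδpos (hδ_le i)
  -- final computation
  rw [EuclideanSpace.norm_eq]
  have hsum : ∑ i, ‖toE (fun i => M⁻¹ i k) i‖^2 ≤ (n : ℝ) * ((deltaVec a)⁻¹)^2 := by
    calc ∑ i, ‖toE (fun i => M⁻¹ i k) i‖^2
        ≤ ∑ _i : Fin n, ((deltaVec a)⁻¹)^2 := by
          refine Finset.sum_le_sum (fun i _ => ?_)
          rw [Real.norm_eq_abs]
          exact pow_le_pow_left₀ (abs_nonneg _) (hentry i) 2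
      _ = (n : ℝ) * ((deltaVec a)⁻¹)^2 := by
          simp [Finset.sum_const, Finset.card_univ, nsmul_eq_mul]
  calc Real.sqrt (∑ i, ‖toE (fun i => M⁻¹ i k) i‖^2)
      ≤ Real.sqrt ((n : ℝ) * ((deltaVec a)⁻¹)^2) := Real.sqrt_le_sqrt hsum
    _ = Real.sqrt n * (deltaVec a)⁻¹ := by
        rw [Real.sqrt_mul (by positivity), Real.sqrt_sq (by positivity)]
    _ = Real.sqrt n / deltaVec a := by rw [div_eq_mul_inv]
end

section
/- Let u₁, …, uₙ ∈ ℝⁿ be vectors, let d ∈ ℝⁿ satisfy ‖d‖ = 1, let i ∈ {1,…,n} be an index with κ := u_iᵀd ≠ 0, and let ε > 0. Let λ = (λ₁,…,λₙ) be drawn uniformly at random from (0,1]ⁿ and set w₁ = −Σ_{j=1}^n λ_j u_j. Then the probability that |w₁ᵀd| ≤ ε is at most 2ε/|κ|. -/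
open scoped RealInnerProductSpace BigOperators
open MeasureTheory ProbabilityTheory Matrix

private lemma stmt12_aux {m : ℕ} (c : Fin (m+1) → ℝ) (i : Fin (m+1)) (hκ : c i ≠ 0) (ε : ℝ) (_hε : 0 < ε) :
    Measure.pi (fun _ : Fin (m+1) => volume.restrict (Set.Ioc (0:ℝ) 1))
        {l : Fin (m+1) → ℝ | |∑ j, l j * c j| ≤ ε} ≤
      ENNReal.ofReal (2 * ε / |c i|) := by
  set μ : Measure ℝ := volume.restrict (Set.Ioc (0:ℝ) 1) with hμdef
  haveI : IsProbabilityMeasure μ := by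
    constructor
    rw [hμdef, Measure.restrict_apply_univ, Real.volume_Ioc]
    norm_num
  set S : Set (Fin (m+1) → ℝ) := {l | |∑ j, l j * c j| ≤ ε} with hSdef
  have hSmeas : MeasurableSet S := by
    apply measurableSet_le _ measurable_const
    exact (Finset.measurable_sum _ fun j _ => (measurable_pi_apply j).mul_const _).abs
  set e := MeasurableEquiv.piFinSuccAbove (fun _ : Fin (m+1) => ℝ) i with hedef
  have hmp := measurePreserving_piFinSuccAbove (fun _ : Fin (m+1) => μ) i
  have hT : MeasurableSet (e.symm ⁻¹' S) := e.symm.measurable hSmeas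
  have hkey : Measure.pi (fun _ : Fin (m+1) => μ) S
      = (μ.prod (Measure.pi fun _ : Fin m => μ)) (e.symm ⁻¹' S) := by
    rw [← (hmp.symm e).measure_preimage hSmeas.nullMeasurableSet]
  rw [hkey, Measure.prod_apply_symm hT]
  have hbound : ∀ y : Fin m → ℝ,
      μ ((fun x => (x, y)) ⁻¹' (e.symm ⁻¹' S)) ≤ ENNReal.ofReal (2 * ε / |c i|) := by
    intro y
    set B : ℝ := ∑ j, y j * c (i.succAbove j) with hB
    have hκpos : 0 < |c i| := abs_pos.mpr hκ
    have hfib : (fun x => (x, y)) ⁻¹' (e.symm ⁻¹' S) = {x : ℝ | |x * c i + B| ≤ ε} := by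
      ext x
      simp only [Set.mem_preimage, hSdef, Set.mem_setOf_eq, hedef,
        MeasurableEquiv.piFinSuccAbove_symm_apply]
      rw [Fin.sum_univ_succAbove _ i]
      simp [Fin.insertNthEquiv, hB]
    rw [hfib]
    have hsub : {x : ℝ | |x * c i + B| ≤ ε} ⊆
        Set.Icc (-B / c i - ε / |c i|) (-B / c i + ε / |c i|) := by
      intro x hx
      simp only [Set.mem_setOf_eq] at hx
      have h1 : |x + B / c i| ≤ ε / |c i| := by
        have : x + B / c i = (x * c i + B) / c i := by field_simp
        rw [this, abs_div]
        exact div_le_div_of_nonneg_right hx hκpos.le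
      rcases abs_le.mp h1 with ⟨h2, h3⟩
      rw [Set.mem_Icc, neg_div]
      constructor <;> linarith
    calc μ {x : ℝ | |x * c i + B| ≤ ε} ≤ volume {x : ℝ | |x * c i + B| ≤ ε} :=
          Measure.restrict_apply_le _ _
      _ ≤ volume (Set.Icc (-B / c i - ε / |c i|) (-B / c i + ε / |c i|)) := measure_mono hsub
      _ = ENNReal.ofReal (2 * ε / |c i|) := by
          rw [Real.volume_Icc]; congr 1; field_simp; ring
  calc ∫⁻ y, μ ((fun x => (x, y)) ⁻¹' (e.symm ⁻¹' S)) ∂(Measure.pi fun _ : Fin m => μ)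
      ≤ ∫⁻ _, ENNReal.ofReal (2 * ε / |c i|) ∂(Measure.pi fun _ : Fin m => μ) :=
        lintegral_mono hbound
    _ = ENNReal.ofReal (2 * ε / |c i|) := by
        rw [lintegral_const, measure_univ, mul_one]

/-- Let u₁, …, uₙ ∈ ℝⁿ, let d ∈ ℝⁿ with ‖d‖ = 1, let i be an index with
κ := uᵢᵀd ≠ 0, and ε > 0. If λ is uniform on (0,1]ⁿ and w₁ = −Σ λⱼuⱼ, then
P[|w₁ᵀd| ≤ ε] ≤ 2ε/|κ|. -/
theorem stmt12 {n : ℕ} (u : Fin n → EuclideanSpace ℝ (Fin n))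
    (d : EuclideanSpace ℝ (Fin n)) (hd : ‖d‖ = 1)
    (i : Fin n) (hκ : ⟪u i, d⟫ ≠ 0) (ε : ℝ) (hε : 0 < ε) :
    Measure.pi (fun _ : Fin n => volume.restrict (Set.Ioc (0:ℝ) 1))
        {l : Fin n → ℝ | |⟪-∑ j, l j • u j, d⟫| ≤ ε} ≤
      ENNReal.ofReal (2 * ε / |⟪u i, d⟫|) := by
  rcases n with _ | m
  · exact i.elim0
  have hset : {l : Fin (m+1) → ℝ | |⟪-∑ j, l j • u j, d⟫| ≤ ε}
      = {l : Fin (m+1) → ℝ | |∑ j, l j * ⟪u j, d⟫| ≤ ε} := by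
    ext l
    simp only [Set.mem_setOf_eq, inner_neg_left, sum_inner, real_inner_smul_left, abs_neg]
  rw [hset]
  exact stmt12_aux (fun j => ⟪u j, d⟫) i hκ ε hε
end

section
/- Let A ∈ ℝ^{m×n} be a matrix whose rows a₁ᵀ, …, a_mᵀ all have Euclidean norm 1, let b ∈ ℝ^m, and suppose the polyhedron P = {x ∈ ℝⁿ : Ax ≤ b} is non-degenerate. Let u₁, …, uₙ and v₁, …, vₙ each be n linearly independent rows of A. Let λ and μ be independent and each drawn uniformly at random from (0,1]ⁿ, and set w₁ = −Σ_{k=1}^n λ_k u_k and w₂ = Σ_{k=1}^n μ_k v_k. For ε > 0 let F_ε denote the event that there exist three pairwise distinct vertices z₁, z₂, z₃ of P such that z₁ and z₃ are neighbors of z₂ and |w₂ᵀ(z₂−z₁)/w₁ᵀ(z₂−z₁) − w₂ᵀ(z₃−z₂)/w₁ᵀ(z₃−z₂)| ≤ ε. Then the probability of F_ε tends to 0 as ε → 0⁺. -/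
open scoped RealInnerProductSpace BigOperators
open MeasureTheory ProbabilityTheory Matrix

/-! ### Auxiliary lemmas -/

section Aux

lemma orth_span_top {n : ℕ} {S : Set (EuclideanSpace ℝ (Fin n))}
    (hS : Submodule.span ℝ S = ⊤) {d : EuclideanSpace ℝ (Fin n)}
    (hd : ∀ w ∈ S, ⟪w, d⟫ = 0) : d = 0 := by
  have h : ∀ w ∈ Submodule.span ℝ S, ⟪w, d⟫ = 0 := by
    intro w hw
    induction hw using Submodule.span_induction with
    | mem x hx => exact hd x hx
    | zero => simp
    | add x y hx hy ihx ihy => rw [inner_add_left, ihx, ihy]; ring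
    | smul c x hx ih => rw [real_inner_smul_left, ih]; ring
  have hdd := h d (by rw [hS]; trivial)
  exact inner_self_eq_zero.mp hdd

lemma null_hyperplane {n : ℕ} (c : Fin n → ℝ) (hc : ∃ k, c k ≠ 0) :
    (volume : Measure (Fin n → ℝ)) {x | ∑ k, x k * c k = 0} = 0 := by
  let L : (Fin n → ℝ) →ₗ[ℝ] ℝ :=
    { toFun := fun x => ∑ k, x k * c k
      map_add' := by intro x y; simp [add_mul, Finset.sum_add_distrib]
      map_smul' := by intro r x; simp [Finset.mul_sum, mul_assoc] }
  have hker : LinearMap.ker L ≠ ⊤ := by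
    obtain ⟨k, hk⟩ := hc
    intro hT
    have hm : Pi.single k (1:ℝ) ∈ LinearMap.ker L := hT ▸ Submodule.mem_top
    rw [LinearMap.mem_ker] at hm
    have : L (Pi.single k 1) = c k := by
      simp only [L, LinearMap.coe_mk, AddHom.coe_mk]
      rw [Finset.sum_eq_single k]
      · simp
      · intro b _ hb; simp [Pi.single_apply, hb]
      · intro hb; exact absurd (Finset.mem_univ k) hb
    rw [this] at hm
    exact hk hm
  have h0 := MeasureTheory.Measure.addHaar_submodule (volume : Measure (Fin n → ℝ))
    (LinearMap.ker L) hker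
  have : {x : Fin n → ℝ | ∑ k, x k * c k = 0} = (LinearMap.ker L : Set (Fin n → ℝ)) := by
    ext x; simp [LinearMap.mem_ker, L]
  rw [this]; exact h0

lemma pi_restrict_eq {n : ℕ} :
    (Measure.pi fun _ : Fin n => volume.restrict (Set.Ioc (0:ℝ) 1)) =
      (volume : Measure (Fin n → ℝ)).restrict (Set.univ.pi fun _ => Set.Ioc (0:ℝ) 1) := by
  refine (Measure.pi_eq fun s hs => ?_)
  rw [Measure.restrict_apply (MeasurableSet.univ_pi hs)]
  have h : (Set.pi Set.univ s) ∩ (Set.univ.pi fun _ => Set.Ioc (0:ℝ) 1)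
      = Set.pi Set.univ (fun i => s i ∩ Set.Ioc 0 1) := by
    ext x; simp [Set.mem_pi, forall_and]
  rw [h, volume_pi_pi]
  simp [Measure.restrict_apply (hs _)]

lemma rho_null {n : ℕ} {s : Set (Fin n → ℝ)} (h : (volume : Measure (Fin n → ℝ)) s = 0) :
    Measure.pi (fun _ : Fin n => volume.restrict (Set.Ioc (0:ℝ) 1)) s = 0 := by
  rw [pi_restrict_eq]
  exact le_antisymm (le_trans (Measure.le_iff'.1 Measure.restrict_le_self s) h.le) (zero_le)

lemma rho_finite {n : ℕ} :
    IsFiniteMeasure (Measure.pi fun _ : Fin n => volume.restrict (Set.Ioc (0:ℝ) 1)) := by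
  constructor
  rw [Measure.pi_univ]
  simp

lemma inner_sum_smul {n : ℕ} (c : Fin n → ℝ) (w : Fin n → EuclideanSpace ℝ (Fin n))
    (d : EuclideanSpace ℝ (Fin n)) : ⟪∑ k, c k • w k, d⟫ = ∑ k, c k * ⟪w k, d⟫ := by
  rw [sum_inner]; exact Finset.sum_congr rfl fun k _ => real_inner_smul_left _ _ _

lemma vertex_eq_of_tight {m n : ℕ} {a : Fin m → EuclideanSpace ℝ (Fin n)} {b : Fin m → ℝ}
    {z x : EuclideanSpace ℝ (Fin n)} (hz : IsVertex a b z)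
    (hx : ∀ i, ⟪a i, z⟫ = b i → ⟪a i, x⟫ = b i) : x = z := by
  have h0 : x - z = 0 := by
    refine orth_span_top hz.2 ?_
    rintro w ⟨i, hi, rfl⟩
    rw [inner_sub_right, hx i hi, hi]; ring
  exact sub_eq_zero.mp h0

lemma vertex_extreme {m n : ℕ} {a : Fin m → EuclideanSpace ℝ (Fin n)} {b : Fin m → ℝ}
    {z x y : EuclideanSpace ℝ (Fin n)} {s t : ℝ} (hz : IsVertex a b z)
    (hx : ∀ i, ⟪a i, x⟫ ≤ b i) (hy : ∀ i, ⟪a i, y⟫ ≤ b i)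
    (hs : 0 < s) (ht : 0 < t) (hst : s + t = 1) (h : z = s • x + t • y) : x = z := by
  refine vertex_eq_of_tight hz ?_
  intro i hi
  by_contra hne
  have hxi : ⟪a i, x⟫ < b i := lt_of_le_of_ne (hx i) hne
  have hlt : ⟪a i, z⟫ < b i := by
    rw [h, inner_add_right, real_inner_smul_right, real_inner_smul_right]
    have h1 : s * ⟪a i, x⟫ < s * b i := mul_lt_mul_of_pos_left hxi hs
    have h2 : t * ⟪a i, y⟫ ≤ t * b i := mul_le_mul_of_nonneg_left (hy i) ht.le
    have h3 : s * b i + t * b i = b i := by rw [← add_mul, hst, one_mul]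
    linarith
  linarith [hi]

lemma not_collinear {m n : ℕ} {a : Fin m → EuclideanSpace ℝ (Fin n)} {b : Fin m → ℝ}
    {z₁ z₂ z₃ : EuclideanSpace ℝ (Fin n)}
    (h12 : z₁ ≠ z₂) (h13 : z₁ ≠ z₃) (h23 : z₂ ≠ z₃)
    (hv1 : IsVertex a b z₁) (hv2 : IsVertex a b z₂) (hv3 : IsVertex a b z₃)
    {β : ℝ} (hβ : β ≠ 0) (h : z₃ - z₂ = β • (z₂ - z₁)) : False := by
  have hz₃ : z₃ = z₂ + β • (z₂ - z₁) := by
    rw [← h]; abel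
  rcases lt_trichotomy β 0 with hneg | hzr | hpos
  · rcases lt_trichotomy β (-1) with hlt | heq | hgt
    · have key : z₁ = ((β+1)/β) • z₂ + (-1/β) • z₃ := by
        rw [hz₃]
        match_scalars
        · field_simp
        · field_simp; ring
      have := vertex_extreme hv1 hv2.1 hv3.1
        (div_pos_of_neg_of_neg (by linarith) hneg)
        (div_pos_of_neg_of_neg (by norm_num) hneg)
        (by field_simp; ring) key
      exact h12 this.symm
    · rw [heq] at hz₃
      have h1 : z₃ = z₁ := by rw [hz₃]; module
      exact h13 h1.symm
    · have key : z₃ = (-β) • z₁ + (1+β) • z₂ := by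
        rw [hz₃]; match_scalars <;> ring
      have := vertex_extreme hv3 hv1.1 hv2.1 (by linarith) (by linarith) (by ring) key
      exact h13 this
  · exact hβ hzr
  · have hb1 : (0:ℝ) < 1 + β := by linarith
    have key : z₂ = (β/(1+β)) • z₁ + (1/(1+β)) • z₃ := by
      rw [hz₃]
      match_scalars <;> field_simp <;> ring
    have := vertex_extreme hv2 hv1.1 hv3.1 (by positivity) (by positivity)
      (by field_simp; ring) key
    exact h12 this
  
lemma vertexSet_finite {m n : ℕ} (a : Fin m → EuclideanSpace ℝ (Fin n)) (b : Fin m → ℝ) :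
    {z : EuclideanSpace ℝ (Fin n) | IsVertex a b z}.Finite := by
  classical
  apply Set.Finite.of_finite_image (f := fun z => {i | ⟪a i, z⟫ = b i})
  · exact Set.toFinite _
  · intro z hz z' hz' hzz
    refine vertex_eq_of_tight hz' fun i hi => ?_
    have h2 : {j | ⟪a j, z⟫ = b j} = {j | ⟪a j, z'⟫ = b j} := hzz
    have h3 : i ∈ {j | ⟪a j, z⟫ = b j} := by rw [h2]; exact hi
    exact h3

lemma triple_null {m n : ℕ} {a : Fin m → EuclideanSpace ℝ (Fin n)} {b : Fin m → ℝ}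
    {u v : Fin n → Fin m}
    (hu : LinearIndependent ℝ (a ∘ u)) (hv : LinearIndependent ℝ (a ∘ v))
    {z₁ z₂ z₃ : EuclideanSpace ℝ (Fin n)}
    (h12 : z₁ ≠ z₂) (h13 : z₁ ≠ z₃) (h23 : z₂ ≠ z₃)
    (hn1 : Neighboring a b z₂ z₁) (hn2 : Neighboring a b z₂ z₃) :
    (Measure.prod (Measure.pi fun _ : Fin n => volume.restrict (Set.Ioc (0:ℝ) 1))
        (Measure.pi fun _ : Fin n => volume.restrict (Set.Ioc (0:ℝ) 1)))
      {p : (Fin n → ℝ) × (Fin n → ℝ) |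
        ⟪∑ k, p.2 k • a (v k), z₂ - z₁⟫ / ⟪-∑ k, p.1 k • a (u k), z₂ - z₁⟫ -
          ⟪∑ k, p.2 k • a (v k), z₃ - z₂⟫ / ⟪-∑ k, p.1 k • a (u k), z₃ - z₂⟫ = 0} = 0 := by
  classical
  haveI := rho_finite (n := n)
  set ρ : Measure (Fin n → ℝ) := Measure.pi fun _ : Fin n => volume.restrict (Set.Ioc (0:ℝ) 1)
    with hρdef
  have spanu : Submodule.span ℝ (Set.range (a ∘ u)) = ⊤ := by
    apply Submodule.eq_top_of_finrank_eq
    rw [finrank_span_eq_card hu]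
    simp
  have spanv : Submodule.span ℝ (Set.range (a ∘ v)) = ⊤ := by
    apply Submodule.eq_top_of_finrank_eq
    rw [finrank_span_eq_card hv]
    simp
  have hd₁ : z₂ - z₁ ≠ 0 := sub_ne_zero.mpr (Ne.symm h12)
  have hd₂ : z₃ - z₂ ≠ 0 := sub_ne_zero.mpr (Ne.symm h23)
  set d₁ := z₂ - z₁ with hd₁def
  set d₂ := z₃ - z₂ with hd₂def
  set A₁ : (Fin n → ℝ) → ℝ := fun l => ∑ k, l k * ⟪a (u k), d₁⟫ with hA₁
  set A₂ : (Fin n → ℝ) → ℝ := fun l => ∑ k, l k * ⟪a (u k), d₂⟫ with hA₂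
  set B₁ : (Fin n → ℝ) → ℝ := fun w => ∑ k, w k * ⟪a (v k), d₁⟫ with hB₁
  set B₂ : (Fin n → ℝ) → ℝ := fun w => ∑ k, w k * ⟪a (v k), d₂⟫ with hB₂
  have hZeq : {p : (Fin n → ℝ) × (Fin n → ℝ) |
        ⟪∑ k, p.2 k • a (v k), d₁⟫ / ⟪-∑ k, p.1 k • a (u k), d₁⟫ -
          ⟪∑ k, p.2 k • a (v k), d₂⟫ / ⟪-∑ k, p.1 k • a (u k), d₂⟫ = 0}
      = {p : (Fin n → ℝ) × (Fin n → ℝ) |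
        B₁ p.2 / (-(A₁ p.1)) - B₂ p.2 / (-(A₂ p.1)) = 0} := by
    ext p
    simp only [Set.mem_setOf_eq, inner_neg_left, inner_sum_smul, hA₁, hA₂, hB₁, hB₂]
  rw [hZeq]
  set S₁ : Set (Fin n → ℝ) := {l | A₁ l = 0} with hS₁
  set S₂ : Set (Fin n → ℝ) := {l | A₂ l = 0} with hS₂
  set M : Set ((Fin n → ℝ) × (Fin n → ℝ)) :=
    {p | A₁ p.1 ≠ 0 ∧ A₂ p.1 ≠ 0 ∧
      (∑ k, p.2 k * (A₂ p.1 * ⟪a (v k), d₁⟫ - A₁ p.1 * ⟪a (v k), d₂⟫)) = 0} with hM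
  have hsub : {p : (Fin n → ℝ) × (Fin n → ℝ) |
        B₁ p.2 / (-(A₁ p.1)) - B₂ p.2 / (-(A₂ p.1)) = 0}
      ⊆ (S₁ ×ˢ Set.univ) ∪ ((S₂ ×ˢ Set.univ) ∪ M) := by
    intro p hp
    simp only [Set.mem_setOf_eq] at hp
    by_cases h1 : A₁ p.1 = 0
    · exact Or.inl ⟨h1, trivial⟩
    by_cases h2 : A₂ p.1 = 0
    · exact Or.inr (Or.inl ⟨h2, trivial⟩)
    refine Or.inr (Or.inr ⟨h1, h2, ?_⟩)
    have hne1 : -(A₁ p.1) ≠ 0 := neg_ne_zero.mpr h1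
    have hne2 : -(A₂ p.1) ≠ 0 := neg_ne_zero.mpr h2
    have heq := (div_eq_div_iff hne1 hne2).mp (sub_eq_zero.mp hp)
    have hx : (∑ k, p.2 k * (A₂ p.1 * ⟪a (v k), d₁⟫ - A₁ p.1 * ⟪a (v k), d₂⟫))
        = A₂ p.1 * B₁ p.2 - A₁ p.1 * B₂ p.2 := by
      rw [hB₁, hB₂, Finset.mul_sum, Finset.mul_sum, ← Finset.sum_sub_distrib]
      exact Finset.sum_congr rfl fun k _ => by ring
    rw [hx]
    linear_combination -heq
  refine measure_mono_null hsub ?_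
  refine measure_union_null ?_ (measure_union_null ?_ ?_)
  · rw [Measure.prod_prod]
    have : ρ S₁ = 0 := by
      apply rho_null
      apply null_hyperplane
      by_contra hc
      push_neg at hc
      exact hd₁ (orth_span_top spanu (by rintro w ⟨k, rfl⟩; exact hc k))
    rw [this, zero_mul]
  · rw [Measure.prod_prod]
    have : ρ S₂ = 0 := by
      apply rho_null
      apply null_hyperplane
      by_contra hc
      push_neg at hc
      exact hd₂ (orth_span_top spanu (by rintro w ⟨k, rfl⟩; exact hc k))
    rw [this, zero_mul]
  · have hA₁c : Continuous fun p : (Fin n → ℝ) × (Fin n → ℝ) => A₁ p.1 := by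
      apply continuous_finset_sum
      exact fun k _ => (((continuous_apply k).comp continuous_fst).mul continuous_const)
    have hA₂c : Continuous fun p : (Fin n → ℝ) × (Fin n → ℝ) => A₂ p.1 := by
      apply continuous_finset_sum
      exact fun k _ => (((continuous_apply k).comp continuous_fst).mul continuous_const)
    have hgc : Continuous fun p : (Fin n → ℝ) × (Fin n → ℝ) =>
        (∑ k, p.2 k * (A₂ p.1 * ⟪a (v k), d₁⟫ - A₁ p.1 * ⟪a (v k), d₂⟫)) := by
      apply continuous_finset_sum
      intro k _
      exact ((continuous_apply k).comp continuous_snd).mul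
        ((hA₂c.mul continuous_const).sub (hA₁c.mul continuous_const))
    have hMm : MeasurableSet M := by
      have hMeq : M = ((fun p : (Fin n → ℝ) × (Fin n → ℝ) => A₁ p.1) ⁻¹' {(0:ℝ)}ᶜ) ∩
          (((fun p : (Fin n → ℝ) × (Fin n → ℝ) => A₂ p.1) ⁻¹' {(0:ℝ)}ᶜ) ∩
           ((fun p : (Fin n → ℝ) × (Fin n → ℝ) =>
              (∑ k, p.2 k * (A₂ p.1 * ⟪a (v k), d₁⟫ - A₁ p.1 * ⟪a (v k), d₂⟫))) ⁻¹' {(0:ℝ)})) := by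
        ext p
        simp [hM, Set.mem_setOf_eq, and_assoc]
      rw [hMeq]
      exact ((hA₁c.measurable (measurableSet_singleton 0).compl).inter
        ((hA₂c.measurable (measurableSet_singleton 0).compl).inter
          (hgc.measurable (measurableSet_singleton 0))))
    rw [Measure.prod_apply hMm]
    have hslice : ∀ l : Fin n → ℝ, ρ (Prod.mk l ⁻¹' M) = 0 := by
      intro l
      by_cases hl : A₁ l ≠ 0 ∧ A₂ l ≠ 0
      · have hseq : Prod.mk l ⁻¹' M =
            {w : Fin n → ℝ | ∑ k, w k * (A₂ l * ⟪a (v k), d₁⟫ - A₁ l * ⟪a (v k), d₂⟫) = 0} := by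
          ext w
          simp [hM, Set.mem_setOf_eq, hl.1, hl.2]
        rw [hseq]
        apply rho_null
        apply null_hyperplane
        by_contra hc
        push_neg at hc
        have hvec : A₂ l • d₁ - A₁ l • d₂ = 0 := by
          apply orth_span_top spanv
          rintro w ⟨k, rfl⟩
          show ⟪a (v k), A₂ l • d₁ - A₁ l • d₂⟫ = 0
          rw [inner_sub_right, real_inner_smul_right, real_inner_smul_right]
          exact hc k
        have hveq : A₂ l • d₁ = A₁ l • d₂ := sub_eq_zero.mp hvec
        have hβ : d₂ = (A₂ l / A₁ l) • d₁ := by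
          rw [div_eq_inv_mul, ← smul_smul, hveq, smul_smul, inv_mul_cancel₀ hl.1, one_smul]
        exact absurd hβ (fun hh =>
          not_collinear h12 h13 h23 hn1.2.1 hn1.1 hn2.2.1 (div_ne_zero hl.2 hl.1) hh)
      · have hseq : Prod.mk l ⁻¹' M = ∅ := by
          ext w
          simp only [hM, Set.mem_preimage, Set.mem_setOf_eq, Set.mem_empty_iff_false, iff_false]
          intro hcon
          exact hl ⟨hcon.1, hcon.2.1⟩
        rw [hseq]
        exact measure_empty
    rw [MeasureTheory.lintegral_congr hslice, lintegral_zero]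

lemma f_measurable {m n : ℕ} (a : Fin m → EuclideanSpace ℝ (Fin n)) (u v : Fin n → Fin m)
    (z₁ z₂ z₃ : EuclideanSpace ℝ (Fin n)) :
    Measurable (fun p : (Fin n → ℝ) × (Fin n → ℝ) =>
      ⟪∑ k, p.2 k • a (v k), z₂ - z₁⟫ / ⟪-∑ k, p.1 k • a (u k), z₂ - z₁⟫ -
        ⟪∑ k, p.2 k • a (v k), z₃ - z₂⟫ / ⟪-∑ k, p.1 k • a (u k), z₃ - z₂⟫) := by
  simp only [inner_neg_left, inner_sum_smul]
  have hfst : ∀ c : Fin n → ℝ,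
      Measurable (fun p : (Fin n → ℝ) × (Fin n → ℝ) => ∑ k, p.1 k * c k) := fun c =>
    Finset.measurable_sum _ fun k _ =>
      ((measurable_pi_apply k).comp measurable_fst).mul measurable_const
  have hsnd : ∀ c : Fin n → ℝ,
      Measurable (fun p : (Fin n → ℝ) × (Fin n → ℝ) => ∑ k, p.2 k * c k) := fun c =>
    Finset.measurable_sum _ fun k _ =>
      ((measurable_pi_apply k).comp measurable_snd).mul measurable_const
  exact ((hsnd _).div ((hfst _).neg)).sub ((hsnd _).div ((hfst _).neg))

end Aux

/-- Let A have unit-norm rows, let P = {x : Ax ≤ b} be non-degenerate,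
let u₁, …, uₙ and v₁, …, vₙ each be n linearly independent rows of A, let λ, μ be
independent and uniform on (0,1]ⁿ, and set w₁ = −Σ λₖuₖ, w₂ = Σ μₖvₖ. For ε > 0 let
F_ε be the event that there exist pairwise distinct vertices z₁, z₂, z₃ of P with z₁
and z₃ neighbors of z₂ and |w₂ᵀ(z₂−z₁)/w₁ᵀ(z₂−z₁) − w₂ᵀ(z₃−z₂)/w₁ᵀ(z₃−z₂)| ≤ ε.
Then P[F_ε] → 0 as ε → 0⁺. -/
theorem stmt14 {m n : ℕ} (a : Fin m → EuclideanSpace ℝ (Fin n)) (b : Fin m → ℝ)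
    (hnorm : ∀ i, ‖a i‖ = 1)
    (hnondeg : ∀ z, IsVertex a b z → {i | ⟪a i, z⟫ = b i}.ncard = n)
    (u v : Fin n → Fin m)
    (hu : LinearIndependent ℝ (a ∘ u)) (hv : LinearIndependent ℝ (a ∘ v)) :
    Filter.Tendsto
      (fun ε : ℝ =>
        Measure.prod (Measure.pi fun _ : Fin n => volume.restrict (Set.Ioc (0:ℝ) 1))
            (Measure.pi fun _ : Fin n => volume.restrict (Set.Ioc (0:ℝ) 1))
          {p : (Fin n → ℝ) × (Fin n → ℝ) | ∃ z₁ z₂ z₃,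
            z₁ ≠ z₂ ∧ z₁ ≠ z₃ ∧ z₂ ≠ z₃ ∧
            Neighboring a b z₂ z₁ ∧ Neighboring a b z₂ z₃ ∧
            |⟪∑ k, p.2 k • a (v k), z₂ - z₁⟫ / ⟪-∑ k, p.1 k • a (u k), z₂ - z₁⟫ -
              ⟪∑ k, p.2 k • a (v k), z₃ - z₂⟫ / ⟪-∑ k, p.1 k • a (u k), z₃ - z₂⟫| ≤ ε})
      (nhdsWithin 0 (Set.Ioi 0)) (nhds 0) := by
  classical
  haveI := rho_finite (n := n)
  set ρ : Measure (Fin n → ℝ) := Measure.pi fun _ : Fin n => volume.restrict (Set.Ioc (0:ℝ) 1)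
    with hρdef
  set Pm : Measure ((Fin n → ℝ) × (Fin n → ℝ)) := ρ.prod ρ with hPm
  -- the triple condition and value function
  set Cnd : EuclideanSpace ℝ (Fin n) × EuclideanSpace ℝ (Fin n) × EuclideanSpace ℝ (Fin n) → Prop :=
    fun t => t.1 ≠ t.2.1 ∧ t.1 ≠ t.2.2 ∧ t.2.1 ≠ t.2.2 ∧
      Neighboring a b t.2.1 t.1 ∧ Neighboring a b t.2.1 t.2.2 with hCnd
  set ff : EuclideanSpace ℝ (Fin n) × EuclideanSpace ℝ (Fin n) × EuclideanSpace ℝ (Fin n) →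
      ((Fin n → ℝ) × (Fin n → ℝ)) → ℝ := fun t p =>
    ⟪∑ k, p.2 k • a (v k), t.2.1 - t.1⟫ / ⟪-∑ k, p.1 k • a (u k), t.2.1 - t.1⟫ -
      ⟪∑ k, p.2 k • a (v k), t.2.2 - t.2.1⟫ / ⟪-∑ k, p.1 k • a (u k), t.2.2 - t.2.1⟫ with hff
  set Ev : ℝ → Set ((Fin n → ℝ) × (Fin n → ℝ)) := fun ε =>
    {p : (Fin n → ℝ) × (Fin n → ℝ) | ∃ z₁ z₂ z₃,
      z₁ ≠ z₂ ∧ z₁ ≠ z₃ ∧ z₂ ≠ z₃ ∧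
      Neighboring a b z₂ z₁ ∧ Neighboring a b z₂ z₃ ∧
      |⟪∑ k, p.2 k • a (v k), z₂ - z₁⟫ / ⟪-∑ k, p.1 k • a (u k), z₂ - z₁⟫ -
        ⟪∑ k, p.2 k • a (v k), z₃ - z₂⟫ / ⟪-∑ k, p.1 k • a (u k), z₃ - z₂⟫| ≤ ε} with hEv
  -- finiteness of the triple set
  have hCfin : {t | Cnd t}.Finite := by
    have hV := vertexSet_finite a b
    apply Set.Finite.subset (hV.prod (hV.prod hV))
    rintro ⟨w₁, w₂, w₃⟩ ⟨-, -, -, hn1, hn2⟩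
    exact ⟨hn1.2.1, hn1.1, hn2.2.1⟩
  haveI hCsub : Finite {t | Cnd t} := hCfin.to_subtype
  -- decomposition of the event
  have hEq : ∀ ε : ℝ, Ev ε = ⋃ t : {t | Cnd t}, {p | |ff t.1 p| ≤ ε} := by
    intro ε
    ext p
    simp only [hEv, Set.mem_setOf_eq, Set.mem_iUnion]
    constructor
    · rintro ⟨w₁, w₂, w₃, c1, c2, c3, c4, c5, hle⟩
      exact ⟨⟨(w₁, w₂, w₃), c1, c2, c3, c4, c5⟩, hle⟩
    · rintro ⟨⟨⟨w₁, w₂, w₃⟩, c1, c2, c3, c4, c5⟩, hle⟩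
      exact ⟨w₁, w₂, w₃, c1, c2, c3, c4, c5, hle⟩
  have hmeasE : ∀ ε : ℝ, MeasurableSet (Ev ε) := by
    intro ε
    rw [hEq]
    exact MeasurableSet.iUnion fun t =>
      measurableSet_le (f_measurable a u v t.1.1 t.1.2.1 t.1.2.2).abs measurable_const
  have hmono : ∀ {ε ε' : ℝ}, ε ≤ ε' → Ev ε ⊆ Ev ε' := by
    intro ε ε' hεε' p hp
    obtain ⟨w₁, w₂, w₃, c1, c2, c3, c4, c5, hle⟩ := hp
    exact ⟨w₁, w₂, w₃, c1, c2, c3, c4, c5, hle.trans hεε'⟩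
  -- sequence of events
  set s : ℕ → Set ((Fin n → ℝ) × (Fin n → ℝ)) := fun k => Ev (1 / (k + 1)) with hs
  have hanti : Antitone s := by
    intro k k' hkk'
    apply hmono
    apply one_div_le_one_div_of_le
    · positivity
    · exact_mod_cast Nat.succ_le_succ hkk'
  have hinter : (⋂ k, s k) ⊆ ⋃ t : {t | Cnd t}, {p | ff t.1 p = 0} := by
    intro p hp
    simp only [Set.mem_iInter] at hp
    have hp' : ∀ k : ℕ, ∃ t : {t | Cnd t}, |ff t.1 p| ≤ 1 / (k + 1) := by
      intro k
      have := hp k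
      rw [hs] at this
      simp only at this
      rw [hEq] at this
      simpa [Set.mem_iUnion] using this
    choose tf htf using hp'
    obtain ⟨t, ht⟩ := Finite.exists_infinite_fiber tf
    refine Set.mem_iUnion.mpr ⟨t, ?_⟩
    have habs : |ff t.1 p| = 0 := by
      by_contra hne
      have hpos : 0 < |ff t.1 p| := lt_of_le_of_ne (abs_nonneg _) (Ne.symm hne)
      obtain ⟨k, hk⟩ := exists_nat_gt (1 / |ff t.1 p|)
      have hinf : (tf ⁻¹' {t}).Infinite := Set.infinite_coe_iff.mp ht
      obtain ⟨k', hk'mem, hkk'⟩ := hinf.exists_gt k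
      have htk' : tf k' = t := hk'mem
      have h1 : |ff t.1 p| ≤ 1 / (k' + 1) := by
        have := htf k'
        rwa [htk'] at this
      have h2 : (1 : ℝ) / (k' + 1) < |ff t.1 p| := by
        rw [div_lt_iff₀ (by positivity)]
        rw [div_lt_iff₀ hpos] at hk
        have hk2 : (k : ℝ) < k' + 1 := by exact_mod_cast Nat.lt_succ_of_lt hkk'
        nlinarith [abs_nonneg (ff t.1 p)]
      linarith
    exact abs_eq_zero.mp habs
  have hZ : Pm (⋂ k, s k) = 0 := by
    refine measure_mono_null hinter (measure_iUnion_null fun t => ?_)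
    obtain ⟨c1, c2, c3, c4, c5⟩ := t.2
    exact triple_null hu hv c1 c2 c3 c4 c5
  have hlim : Filter.Tendsto (fun k => Pm (s k)) Filter.atTop (nhds 0) := by
    have := tendsto_measure_iInter_atTop (μ := Pm)
      (fun k => (hmeasE _).nullMeasurableSet) hanti ⟨0, measure_ne_top Pm _⟩
    rwa [hZ] at this
  -- conclude
  rw [show (fun ε : ℝ =>
        Measure.prod (Measure.pi fun _ : Fin n => volume.restrict (Set.Ioc (0:ℝ) 1))
            (Measure.pi fun _ : Fin n => volume.restrict (Set.Ioc (0:ℝ) 1))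
          {p : (Fin n → ℝ) × (Fin n → ℝ) | ∃ z₁ z₂ z₃,
            z₁ ≠ z₂ ∧ z₁ ≠ z₃ ∧ z₂ ≠ z₃ ∧
            Neighboring a b z₂ z₁ ∧ Neighboring a b z₂ z₃ ∧
            |⟪∑ k, p.2 k • a (v k), z₂ - z₁⟫ / ⟪-∑ k, p.1 k • a (u k), z₂ - z₁⟫ -
              ⟪∑ k, p.2 k • a (v k), z₃ - z₂⟫ / ⟪-∑ k, p.1 k • a (u k), z₃ - z₂⟫| ≤ ε})
      = fun ε : ℝ => Pm (Ev ε) from rfl]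
  rw [ENNReal.tendsto_nhds_zero]
  intro η hη
  obtain ⟨k₀, hk₀⟩ := (hlim.eventually_lt_const hη).exists
  have hIoc : Set.Ioc (0:ℝ) (1 / (k₀ + 1)) ∈ nhdsWithin (0:ℝ) (Set.Ioi 0) :=
    Ioc_mem_nhdsGT_of_mem ⟨le_refl 0, by positivity⟩
  filter_upwards [hIoc] with ε hε
  exact le_trans (measure_mono (hmono hε.2)) hk₀.le
end
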